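/- arXiv:0906.5308 — 11 statements merged into one kernel-verified Lean document; each statement's English description precedes it below -/
import Mathlib

section
/- Let w:(0,∞)→(0,∞) be nonincreasing, right-continuous and integrable, and let h(t)=∫_t^∞ w(s) ds and g(s)=inf_{t>0} max(t, s·h(t)). Then for every s>0 there exists a unique t>0 with t = s·h(t); the infimum defining g(s) is attained exactly at this t, so that g(s)=t=s·h(t). Consequently g is a continuous increasing bijection of (0,∞) onto (0,∞) and h(t)/t = 1/g⁻¹(t) for every t>0, where g⁻¹ denotes the inverse function of g. -/
open MeasureTheory Set

/-- Lemma 3.3 (iii) and identity (3.3): for every `s > 0` there is a unique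
`t > 0` with `t = s·h(t)`; the infimum defining `g(s)` is attained exactly
there, `g` is a continuous increasing bijection of `(0,∞)` onto itself, and
`h(t)/t = 1/g⁻¹(t)` for every `t > 0`. -/
theorem stmt_1
    (w h g : ℝ → ℝ)
    (hw_pos : ∀ t ∈ Ioi (0:ℝ), 0 < w t)
    (hw_anti : AntitoneOn w (Ioi 0))
    (hw_rc : ∀ t ∈ Ioi (0:ℝ), ContinuousWithinAt w (Ici t) t)
    (hw_int : IntegrableOn w (Ioi 0))
    (hh : ∀ t, h t = ∫ s in Ioi t, w s)
    (hg : ∀ s, g s = ⨅ t : Ioi (0:ℝ), max (t : ℝ) (s * h (t : ℝ))) :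
    (∀ s ∈ Ioi (0:ℝ), ∃ t ∈ Ioi (0:ℝ),
        t = s * h t ∧
        (∀ t' ∈ Ioi (0:ℝ), t' = s * h t' → t' = t) ∧
        g s = max t (s * h t) ∧
        (∀ t' ∈ Ioi (0:ℝ), t' ≠ t → g s < max t' (s * h t'))) ∧
    StrictMonoOn g (Ioi 0) ∧ ContinuousOn g (Ioi 0) ∧ BijOn g (Ioi 0) (Ioi 0) ∧
    (∀ ginv : ℝ → ℝ, (∀ s ∈ Ioi (0:ℝ), ginv (g s) = s) →
        ∀ t ∈ Ioi (0:ℝ), h t / t = 1 / ginv t) := by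
  -- integrability on subsets
  have hIoi_int : ∀ t : ℝ, 0 < t → IntegrableOn w (Ioi t) :=
    fun t ht => hw_int.mono_set (Ioi_subset_Ioi ht.le)
  have hIoc_int : ∀ a b : ℝ, 0 < a → IntegrableOn w (Ioc a b) :=
    fun a b ha => hw_int.mono_set (fun x hx => lt_trans ha hx.1)
  -- decomposition of h
  have hdiff : ∀ a b : ℝ, 0 < a → a ≤ b → h a = (∫ x in Ioc a b, w x) + h b := by
    intro a b ha hab
    rw [hh, hh, ← setIntegral_union (by
        rw [Set.disjoint_left]; intro x hx hx'; exact absurd hx.2 (not_le.2 hx'))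
      measurableSet_Ioi (hIoc_int a b ha) (hIoi_int b (lt_of_lt_of_le ha hab)),
      Ioc_union_Ioi_eq_Ioi hab]
  -- positivity of pieces
  have hApos : ∀ a b : ℝ, 0 < a → a < b → 0 < ∫ x in Ioc a b, w x := by
    intro a b ha hab
    have hb : (0:ℝ) < b := lt_trans ha hab
    have key := setIntegral_ge_of_const_le (c := w b) measurableSet_Ioc
      (by simp [Real.volume_Ioc]) (fun x hx => hw_anti (lt_trans ha hx.1) hb hx.2)
      (hIoc_int a b ha)
    have : w b * (volume (Ioc a b)).toReal = w b * (b - a) := by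
      rw [Real.volume_Ioc, ENNReal.toReal_ofReal (by linarith)]
    rw [measureReal_def, smul_eq_mul, mul_comm, this] at key
    have : 0 < w b * (b - a) := mul_pos (hw_pos b hb) (by linarith)
    linarith
  have hAnonneg : ∀ a b : ℝ, 0 < a → 0 ≤ ∫ x in Ioc a b, w x := by
    intro a b ha
    exact setIntegral_nonneg measurableSet_Ioc
      (fun x hx => (hw_pos x (lt_trans ha hx.1)).le)
  -- h strictly antitone, antitone, positive on (0,∞)
  have hanti : ∀ a b : ℝ, 0 < a → a < b → h b < h a := by
    intro a b ha hab
    have := hdiff a b ha hab.le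
    have := hApos a b ha hab
    linarith
  have hmono_le : ∀ a b : ℝ, 0 < a → a ≤ b → h b ≤ h a := by
    intro a b ha hab
    have := hdiff a b ha hab
    have := hAnonneg a b ha
    linarith
  have hpos : ∀ t : ℝ, 0 < t → 0 < h t := by
    intro t ht
    have h1 := hdiff t (t + 1) ht (by linarith)
    have h2 := hApos t (t + 1) ht (by linarith)
    have h3 : 0 ≤ h (t + 1) := by
      rw [hh]
      exact setIntegral_nonneg measurableSet_Ioi
        (fun x hx => (hw_pos x (lt_trans (by linarith : (0:ℝ) < t + 1) hx)).le)
    linarith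
  -- h is continuous on (0,∞), via local Lipschitz bounds
  have hcont : ContinuousOn h (Ioi 0) := by
    intro x0 hx0
    have ha : (0:ℝ) < x0 / 2 := by simpa using half_pos (show (0:ℝ) < x0 from hx0)
    have hlip : LipschitzOnWith (Real.toNNReal (w (x0 / 2))) h (Ici (x0 / 2)) := by
      rw [lipschitzOnWith_iff_dist_le_mul]
      have key : ∀ x ∈ Ici (x0/2), ∀ y ∈ Ici (x0/2), x ≤ y →
          dist (h x) (h y) ≤ (Real.toNNReal (w (x0/2))) * dist x y := by
        intro x hx y hy hxy
        have hxpos : (0:ℝ) < x := lt_of_lt_of_le ha hx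
        have hd := hdiff x y hxpos hxy
        have hb : (∫ z in Ioc x y, w z) ≤ w (x0/2) * (y - x) := by
          have : (∫ z in Ioc x y, w z) ≤ ∫ z in Ioc x y, w (x0/2) := by
            apply setIntegral_mono_on (hIoc_int x y hxpos)
              (integrableOn_const (by simp [Real.volume_Ioc]))
              measurableSet_Ioc
            intro z hz
            exact hw_anti ha (lt_trans ha (lt_of_le_of_lt hx hz.1)) (le_trans hx hz.1.le)
          rw [setIntegral_const, measureReal_def, Real.volume_Ioc, smul_eq_mul] at this
          calc (∫ z in Ioc x y, w z) ≤ (ENNReal.ofReal (y - x)).toReal * w (x0/2) := this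
            _ ≤ w (x0/2) * (y - x) := by
                rcases le_or_gt x y with hle | hlt
                · rw [ENNReal.toReal_ofReal (by linarith)]; ring_nf; exact le_rfl
                · linarith [(hw_pos _ ha)]
        have hnn := hAnonneg x y hxpos
        rw [Real.dist_eq, Real.dist_eq,
          abs_of_nonneg (by linarith : (0:ℝ) ≤ h x - h y),
          abs_sub_comm x y, abs_of_nonneg (by linarith : (0:ℝ) ≤ y - x)]
        have : ((Real.toNNReal (w (x0/2))) : ℝ) = w (x0/2) :=
          Real.coe_toNNReal _ (hw_pos _ ha).le
        rw [this]; linarith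
      intro x hx y hy
      rcases le_total x y with hxy | hxy
      · exact key x hx y hy hxy
      · rw [dist_comm (h x) (h y), dist_comm x y]; exact key y hy x hx hxy
    have : ContinuousAt h x0 :=
      (hlip.continuousOn).continuousAt (Ici_mem_nhds (by linarith))
    exact this.continuousWithinAt
  -- uniqueness of fixed points
  have huniq : ∀ s : ℝ, 0 < s → ∀ t t' : ℝ, 0 < t → 0 < t' →
      t = s * h t → t' = s * h t' → t' = t := by
    intro s hs t t' ht ht' hft hft'
    by_contra hne
    rcases lt_or_gt_of_ne hne with hlt | hlt
    · have := hanti t' t ht' hlt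
      nlinarith
    · have := hanti t t' ht hlt
      nlinarith
  -- existence of fixed points
  have hfix : ∀ s : ℝ, 0 < s → ∃ t : ℝ, 0 < t ∧ t = s * h t := by
    intro s hs
    set c := s * h 1 with hc
    have hcpos : 0 < c := mul_pos hs (hpos 1 one_pos)
    set t0 := min 1 c / 2 with ht0def
    have ht0pos : 0 < t0 := by positivity
    have ht0lt1 : t0 < 1 := by
      have : min 1 c / 2 < min 1 c := half_lt_self (by positivity)
      exact lt_of_lt_of_le this (min_le_left _ _)
    have ht0ltc : t0 < c := by
      have : min 1 c / 2 < min 1 c := half_lt_self (by positivity)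
      exact lt_of_lt_of_le this (min_le_right _ _)
    set T := max 1 c + 1 with hT
    have hT1 : (1:ℝ) < T := by
      have := le_max_left (1:ℝ) c; linarith
    have hTc : c < T := by
      have := le_max_right (1:ℝ) c; linarith
    have hsub : Icc t0 T ⊆ Ioi (0:ℝ) := fun x hx => lt_of_lt_of_le ht0pos hx.1
    have hφcont : ContinuousOn (fun t => s * h t - t) (Icc t0 T) :=
      ((continuousOn_const.mul (hcont.mono hsub)).sub continuousOn_id)
    have hφT : s * h T - T < 0 := by
      have : h T < h 1 := hanti 1 T one_pos hT1
      nlinarith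
    have hφt0 : 0 < s * h t0 - t0 := by
      have : h 1 < h t0 := hanti t0 1 ht0pos ht0lt1
      nlinarith
    have h0mem : (0:ℝ) ∈ Icc (s * h T - T) (s * h t0 - t0) := ⟨hφT.le, hφt0.le⟩
    have hle : t0 ≤ T := by linarith
    obtain ⟨t, htmem, htval⟩ := intermediate_value_Icc' hle hφcont h0mem
    have h0 : s * h t - t = 0 := htval
    exact ⟨t, lt_of_lt_of_le ht0pos htmem.1, by linarith⟩
  -- value of g at s, with strictness
  have hgval : ∀ s : ℝ, 0 < s → ∀ t : ℝ, 0 < t → t = s * h t →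
      g s = t ∧ ∀ t' : ℝ, 0 < t' → t' ≠ t → t < max t' (s * h t') := by
    intro s hs t ht hft
    have lbound : ∀ t' : ℝ, 0 < t' → t ≤ max t' (s * h t') := by
      intro t' ht'
      rcases le_or_gt t t' with hle | hlt
      · exact le_trans hle (le_max_left _ _)
      · have : h t < h t' := hanti t' t ht' hlt
        have : t < s * h t' := by nlinarith
        exact le_trans this.le (le_max_right _ _)
    have strict : ∀ t' : ℝ, 0 < t' → t' ≠ t → t < max t' (s * h t') := by
      intro t' ht' hne
      rcases lt_or_gt_of_ne hne with hlt | hlt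
      · have : h t < h t' := hanti t' t ht' hlt
        have : t < s * h t' := by nlinarith
        exact lt_of_lt_of_le this (le_max_right _ _)
      · exact lt_of_lt_of_le hlt (le_max_left _ _)
    constructor
    · rw [hg]
      apply le_antisymm
      · have hbdd : BddBelow (range fun t' : Ioi (0:ℝ) => max (t' : ℝ) (s * h (t' : ℝ))) := by
          refine ⟨t, ?_⟩
          rintro x ⟨⟨t', ht'⟩, rfl⟩
          exact lbound t' ht'
        have := ciInf_le hbdd (⟨t, ht⟩ : Ioi (0:ℝ))
        simpa [← hft] using this
      · exact le_ciInf (fun t' => lbound t' t'.2)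
    · exact strict
  -- g is the inverse of t ↦ t / h t
  have hginv : ∀ t : ℝ, 0 < t → 0 < t / h t ∧ g (t / h t) = t := by
    intro t ht
    have hht := hpos t ht
    have hs : 0 < t / h t := div_pos ht hht
    have : (t / h t) * h t = t := div_mul_cancel₀ t hht.ne'
    exact ⟨hs, (hgval _ hs t ht this.symm).1⟩
  -- main conjuncts
  have hmain : ∀ s ∈ Ioi (0:ℝ), ∃ t ∈ Ioi (0:ℝ),
      t = s * h t ∧
      (∀ t' ∈ Ioi (0:ℝ), t' = s * h t' → t' = t) ∧
      g s = max t (s * h t) ∧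
      (∀ t' ∈ Ioi (0:ℝ), t' ≠ t → g s < max t' (s * h t')) := by
    intro s hs
    obtain ⟨t, ht, hft⟩ := hfix s hs
    obtain ⟨hgv, hstrict⟩ := hgval s hs t ht hft
    refine ⟨t, ht, hft, fun t' ht' hft' => huniq s hs t t' ht ht' hft hft', ?_, ?_⟩
    · rw [hgv, ← hft, max_self]
    · intro t' ht' hne
      rw [hgv]
      exact hstrict t' ht' hne
  have hsm : StrictMonoOn g (Ioi 0) := by
    intro s1 hs1 s2 hs2 hlt
    obtain ⟨t1, ht1, hft1⟩ := hfix s1 hs1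
    obtain ⟨t2, ht2, hft2⟩ := hfix s2 hs2
    rw [(hgval s1 hs1 t1 ht1 hft1).1, (hgval s2 hs2 t2 ht2 hft2).1]
    by_contra hcon
    push_neg at hcon
    have hh12 : h t1 ≤ h t2 := hmono_le t2 t1 ht2 hcon
    have hp2 := hpos t2 ht2
    have hs1' : (0:ℝ) < s1 := hs1
    have h1 : s1 * h t1 ≤ s1 * h t2 := mul_le_mul_of_nonneg_left hh12 hs1'.le
    have h2 : s1 * h t2 < s2 * h t2 := mul_lt_mul_of_pos_right hlt hp2
    linarith
  have hbij : BijOn g (Ioi 0) (Ioi 0) := by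
    refine ⟨?_, hsm.injOn, ?_⟩
    · intro s hs
      obtain ⟨t, ht, hft⟩ := hfix s hs
      rw [(hgval s hs t ht hft).1]
      exact ht
    · intro t ht
      obtain ⟨hs, hgs⟩ := hginv t ht
      exact ⟨t / h t, hs, hgs⟩
  have hcg : ContinuousOn g (Ioi 0) := by
    intro s0 hs0
    have : ContinuousAt g s0 := by
      apply continuousAt_of_monotoneOn_of_image_mem_nhds hsm.monotoneOn
        (isOpen_Ioi.mem_nhds hs0)
      rw [hbij.image_eq]
      exact isOpen_Ioi.mem_nhds (hbij.mapsTo hs0)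
    exact this.continuousWithinAt
  refine ⟨hmain, hsm, hcg, hbij, ?_⟩
  intro ginv hginv' t ht
  obtain ⟨hs, hgs⟩ := hginv t ht
  have heq : ginv t = t / h t := by
    have := hginv' (t / h t) hs
    rw [hgs] at this
    exact this
  rw [heq, one_div_div]
end

section
/- Let w:(0,∞)→(0,∞) be nonincreasing, right-continuous and integrable, with h(t)=∫_t^∞ w(s) ds. Assume w satisfies condition (3.6) with constants c₁,d₁>0 and α₁>1. Then d₁⁻¹·t·w(t) ≤ h(t) ≤ (c₁(α₁−1))⁻¹·t·w(t) for all t ≥ 1, and consequently h satisfies condition (3.7) with constants c₂,d₂,α₂>0 depending only on c₁,d₁,α₁ (one may take α₂ = α₁−1). -/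
open MeasureTheory Set

/-- Lemma 3.5, implication (i) ⇒ (ii) with the quantitative bounds from the
proof: if `w` satisfies condition (3.6) with constants `c₁, d₁, α₁` (`α₁ > 1`),
then `d₁⁻¹ t w(t) ≤ h(t) ≤ (c₁(α₁-1))⁻¹ t w(t)` for `t ≥ 1`, and `h` satisfies
condition (3.7) with exponent `α₂ = α₁ - 1`. -/
theorem stmt_2
    (w h : ℝ → ℝ) (c₁ d₁ α₁ : ℝ)
    (hw_pos : ∀ t ∈ Ioi (0:ℝ), 0 < w t)
    (hw_anti : AntitoneOn w (Ioi 0))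
    (hw_rc : ∀ t ∈ Ioi (0:ℝ), ContinuousWithinAt w (Ici t) t)
    (hw_int : IntegrableOn w (Ioi 0))
    (hh : ∀ t, h t = ∫ s in Ioi t, w s)
    (hc₁ : 0 < c₁) (hd₁ : 0 < d₁) (hα₁ : 1 < α₁)
    (h36a : ∀ s t : ℝ, 1 ≤ s → s ≤ t → c₁ * (t / s) ^ α₁ ≤ w s / w t)
    (h36b : ∀ s : ℝ, 1 ≤ s → w s / w (2 * s) ≤ d₁) :
    (∀ t : ℝ, 1 ≤ t → d₁⁻¹ * (t * w t) ≤ h t ∧ h t ≤ (c₁ * (α₁ - 1))⁻¹ * (t * w t)) ∧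
    (∃ c₂ d₂ : ℝ, 0 < c₂ ∧ 0 < d₂ ∧
      (∀ s t : ℝ, 1 ≤ s → s ≤ t → c₂ * (t / s) ^ (α₁ - 1) ≤ h s / h t) ∧
      (∀ s : ℝ, 1 ≤ s → h s / h (2 * s) ≤ d₂)) := by
  have hα0 : 0 < α₁ - 1 := by linarith
  have hwpos : ∀ t : ℝ, 1 ≤ t → 0 < w t := fun t ht =>
    hw_pos t (by simp only [mem_Ioi]; linarith)
  -- Lower bound
  have lower : ∀ t : ℝ, 1 ≤ t → d₁⁻¹ * (t * w t) ≤ h t := by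
    intro t ht
    have ht0 : (0:ℝ) < t := by linarith
    have h2t1 : (1:ℝ) ≤ 2 * t := by linarith
    have hw2 : d₁⁻¹ * w t ≤ w (2 * t) := by
      rw [inv_mul_le_iff₀ hd₁]
      exact (div_le_iff₀ (hwpos _ h2t1)).mp (h36b t ht)
    have int_t : IntegrableOn w (Ioi t) := hw_int.mono_set (Ioi_subset_Ioi ht0.le)
    have step1 : ∫ s in Ioc t (2*t), w s ≤ ∫ s in Ioi t, w s := by
      apply setIntegral_mono_set int_t
      · filter_upwards [ae_restrict_mem measurableSet_Ioi] with x hx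
        exact (hw_pos x (by simp only [mem_Ioi] at hx ⊢; linarith)).le
      · exact (Ioc_subset_Ioi_self).eventuallyLE
    have step2 : t * w (2*t) ≤ ∫ s in Ioc t (2*t), w s := by
      have hc : ∫ _ in Ioc t (2*t), w (2*t) = t * w (2*t) := by
        rw [setIntegral_const, measureReal_def, Real.volume_Ioc, ENNReal.toReal_ofReal (by linarith)]
        rw [smul_eq_mul]; ring
      rw [← hc]
      apply setIntegral_mono_on
      · exact integrableOn_const measure_Ioc_lt_top.ne
      · exact int_t.mono_set Ioc_subset_Ioi_self
      · exact measurableSet_Ioc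
      · intro x hx
        exact hw_anti (by simp only [mem_Ioi]; linarith [hx.1])
          (by simp only [mem_Ioi]; linarith) hx.2
    have : d₁⁻¹ * (t * w t) = t * (d₁⁻¹ * w t) := by ring
    rw [hh, this]
    calc t * (d₁⁻¹ * w t) ≤ t * w (2*t) := by
          exact mul_le_mul_of_nonneg_left hw2 ht0.le
      _ ≤ ∫ s in Ioc t (2*t), w s := step2
      _ ≤ ∫ s in Ioi t, w s := step1
  -- Upper bound
  have upper : ∀ t : ℝ, 1 ≤ t → h t ≤ (c₁ * (α₁ - 1))⁻¹ * (t * w t) := by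
    intro t ht
    have ht0 : (0:ℝ) < t := by linarith
    have int_t : IntegrableOn w (Ioi t) := hw_int.mono_set (Ioi_subset_Ioi ht0.le)
    set C : ℝ := w t * t ^ α₁ / c₁ with hC
    have hb : ∀ s ∈ Ioi t, w s ≤ C * s ^ (-α₁) := by
      intro s hs
      simp only [mem_Ioi] at hs
      have hs0 : (0:ℝ) < s := ht0.trans hs
      have hws : 0 < w s := hw_pos s hs0
      have h1 := h36a t s ht hs.le
      have e : (0:ℝ) < c₁ * (s/t) ^ α₁ := by positivity
      have h2 : w s ≤ w t / (c₁ * (s/t) ^ α₁) := by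
        rw [le_div_iff₀ e]
        have h1' := mul_le_mul_of_nonneg_right h1 hws.le
        rw [div_mul_cancel₀ _ hws.ne'] at h1'
        linarith
      have e2 : w t / (c₁ * (s/t) ^ α₁) = C * s ^ (-α₁) := by
        rw [Real.rpow_neg hs0.le, Real.div_rpow hs0.le ht0.le, hC]
        have h3 : (s:ℝ) ^ α₁ ≠ 0 := by positivity
        have h4 : (t:ℝ) ^ α₁ ≠ 0 := by positivity
        field_simp
        try ring
      linarith [e2 ▸ h2]
    have intC : IntegrableOn (fun s : ℝ => C * s ^ (-α₁)) (Ioi t) :=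
      (integrableOn_Ioi_rpow_of_lt (by linarith) ht0).const_mul C
    have step : ∫ s in Ioi t, w s ≤ ∫ s in Ioi t, C * s ^ (-α₁) :=
      setIntegral_mono_on int_t intC measurableSet_Ioi hb
    have hval : ∫ s in Ioi t, C * s ^ (-α₁) = C * (-t ^ (-α₁ + 1) / (-α₁ + 1)) := by
      rw [integral_const_mul, integral_Ioi_rpow_of_lt (by linarith) ht0]
    have hfin : C * (-t ^ (-α₁ + 1) / (-α₁ + 1)) = (c₁ * (α₁ - 1))⁻¹ * (t * w t) := by
      have ha : t ^ α₁ * t ^ (-α₁ + 1) = t := by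
        rw [← Real.rpow_add ht0]
        simp
      have hne : (α₁ : ℝ) - 1 ≠ 0 := hα0.ne'
      have hne2 : (-α₁ + 1) ≠ 0 := by intro hx; linarith
      rw [hC]
      field_simp
      linear_combination (w t * (1 - α₁)) * ha
    rw [hh]
    calc (∫ s in Ioi t, w s) ≤ ∫ s in Ioi t, C * s ^ (-α₁) := step
      _ = (c₁ * (α₁ - 1))⁻¹ * (t * w t) := by rw [hval, hfin]
  have hpos : ∀ t : ℝ, 1 ≤ t → 0 < h t := fun t ht =>
    lt_of_lt_of_le (by have := hwpos t ht; positivity) (lower t ht)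
  refine ⟨fun t ht => ⟨lower t ht, upper t ht⟩,
    c₁^2 * (α₁ - 1) / d₁, d₁^2 / (2 * c₁ * (α₁ - 1)), by positivity, by positivity, ?_, ?_⟩
  · intro s t hs hst
    have ht1 : 1 ≤ t := hs.trans hst
    have hs0 : (0:ℝ) < s := by linarith
    have ht0 : (0:ℝ) < t := by linarith
    have hts : (0:ℝ) < t / s := by positivity
    rw [le_div_iff₀ (hpos t ht1)]
    have hws : c₁ * (t/s) ^ α₁ * w t ≤ w s :=
      (le_div_iff₀ (hwpos t ht1)).mp (h36a s t hs hst)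
    have hsplit : (t/s) ^ α₁ = (t/s) ^ (α₁ - 1) * (t/s) := by
      rw [← Real.rpow_add_one hts.ne']; ring_nf
    calc c₁^2 * (α₁ - 1) / d₁ * (t/s) ^ (α₁ - 1) * h t
        ≤ c₁^2 * (α₁ - 1) / d₁ * (t/s) ^ (α₁ - 1) * ((c₁ * (α₁ - 1))⁻¹ * (t * w t)) := by
          apply mul_le_mul_of_nonneg_left (upper t ht1); positivity
      _ = d₁⁻¹ * (s * (c₁ * (t/s) ^ α₁ * w t)) := by
          rw [hsplit]; field_simp
      _ ≤ d₁⁻¹ * (s * w s) := by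
          apply mul_le_mul_of_nonneg_left _ (by positivity)
          exact mul_le_mul_of_nonneg_left hws hs0.le
      _ ≤ h s := lower s hs
  · intro s hs
    have h2s : (1:ℝ) ≤ 2 * s := by linarith
    have hs0 : (0:ℝ) < s := by linarith
    rw [div_le_iff₀ (hpos _ h2s)]
    have hb : w s ≤ d₁ * w (2*s) := (div_le_iff₀ (hwpos _ h2s)).mp (h36b s hs)
    calc h s ≤ (c₁ * (α₁ - 1))⁻¹ * (s * w s) := upper s hs
      _ ≤ (c₁ * (α₁ - 1))⁻¹ * (s * (d₁ * w (2*s))) := by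
          apply mul_le_mul_of_nonneg_left _ (by positivity)
          exact mul_le_mul_of_nonneg_left hb hs0.le
      _ = d₁^2 / (2 * c₁ * (α₁ - 1)) * (d₁⁻¹ * (2*s * w (2*s))) := by
          field_simp
      _ ≤ d₁^2 / (2 * c₁ * (α₁ - 1)) * h (2*s) := by
          apply mul_le_mul_of_nonneg_left (lower _ h2s) (by positivity)
end

section
/- Let w:(0,∞)→(0,∞) be nonincreasing, right-continuous and integrable, and let h(t)=∫_t^∞ w(s) ds and g(s)=inf_{t>0} max(t, s·h(t)). Assume h satisfies condition (3.7) with constants c₂,d₂,α₂>0. Then there exist constants c',d'>0 depending only on c₂,d₂,α₂ such that h(t)/t ≤ d'·w(t) for all t ≥ 1 and c'·w(t) ≤ h(t)/t for all t ≥ 2; since h(t)/t = 1/g⁻¹(t), it follows that c'·w(t) ≤ 1/g⁻¹(t) ≤ d'·w(t) for all t ≥ 2. Moreover w satisfies condition (3.6) with exponent α₁ = 1+α₂ and constants depending only on c₂,d₂,α₂, for all t ≥ s ≥ 2. -/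
open MeasureTheory Set

/-- Lemma 3.5, implication (ii) ⇒ (i) together with estimate (3.9): if `h`
satisfies condition (3.7) with constants `c₂, d₂, α₂`, then `h(t)/t ∼ w(t)`
(hence `w(t) ∼ 1/g⁻¹(t)`), and `w` satisfies condition (3.6) with exponent
`α₁ = 1 + α₂`, all constants depending only on `c₂, d₂, α₂`. -/
theorem stmt_3 (c₂ d₂ α₂ : ℝ) (hc₂ : 0 < c₂) (hd₂ : 0 < d₂) (hα₂ : 0 < α₂) :
    ∃ c' d' c₁ d₁ : ℝ, 0 < c' ∧ 0 < d' ∧ 0 < c₁ ∧ 0 < d₁ ∧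
      ∀ w h g : ℝ → ℝ,
        (∀ t ∈ Ioi (0:ℝ), 0 < w t) →
        AntitoneOn w (Ioi 0) →
        (∀ t ∈ Ioi (0:ℝ), ContinuousWithinAt w (Ici t) t) →
        IntegrableOn w (Ioi 0) →
        (∀ t, h t = ∫ s in Ioi t, w s) →
        (∀ s, g s = ⨅ t : Ioi (0:ℝ), max (t : ℝ) (s * h (t : ℝ))) →
        (∀ s t : ℝ, 1 ≤ s → s ≤ t → c₂ * (t / s) ^ α₂ ≤ h s / h t) →
        (∀ s : ℝ, 1 ≤ s → h s / h (2 * s) ≤ d₂) →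
        (∀ t : ℝ, 1 ≤ t → h t / t ≤ d' * w t) ∧
        (∀ t : ℝ, 2 ≤ t → c' * w t ≤ h t / t) ∧
        (∀ ginv : ℝ → ℝ,
            (∀ s ∈ Ioi (0:ℝ), ginv (g s) = s) →
            (∀ t ∈ Ioi (0:ℝ), ginv t ∈ Ioi (0:ℝ) ∧ g (ginv t) = t) →
            ∀ t : ℝ, 2 ≤ t → c' * w t ≤ 1 / ginv t ∧ 1 / ginv t ≤ d' * w t) ∧
        (∀ s t : ℝ, 2 ≤ s → s ≤ t → c₁ * (t / s) ^ (1 + α₂) ≤ w s / w t) ∧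
        (∀ s : ℝ, 2 ≤ s → w s / w (2 * s) ≤ d₁) := by
  classical
  obtain ⟨n, hn⟩ : ∃ n : ℕ, 2 / c₂ < ((2:ℝ) ^ α₂) ^ n :=
    pow_unbounded_of_one_lt _
      ((Real.one_lt_rpow_iff_of_pos (by norm_num)).mpr (Or.inl ⟨one_lt_two, hα₂⟩))
  have hP : (0:ℝ) < 2 ^ n := by positivity
  have hpow : (((2:ℝ) ^ n) : ℝ) ^ α₂ = ((2:ℝ) ^ α₂) ^ n := by
    rw [← Real.rpow_natCast 2 n, ← Real.rpow_natCast ((2:ℝ) ^ α₂) n,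
      ← Real.rpow_mul (by norm_num), ← Real.rpow_mul (by norm_num), mul_comm]
  have hK : 2 ≤ c₂ * ((2:ℝ) ^ n) ^ α₂ := by
    rw [hpow]
    rw [div_lt_iff₀ hc₂] at hn
    nlinarith
  refine ⟨1 / (2 * d₂), 2 * 2 ^ n, c₂ / (4 * d₂ * 2 ^ n), 8 * d₂ ^ 2 * 2 ^ n,
    by positivity, by positivity, by positivity, by positivity, ?_⟩
  intro w h g hw hwa _hwc hwint hh hg h37a h37b
  -- basic integrability facts
  have hwint' : ∀ a : ℝ, 0 < a → IntegrableOn w (Ioi a) := fun a ha =>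
    hwint.mono_set (Ioi_subset_Ioi ha.le)
  have hwintIoc : ∀ a b : ℝ, 0 < a → IntegrableOn w (Ioc a b) := fun a b ha =>
    hwint.mono_set (fun x hx => ha.trans hx.1)
  have hsplit : ∀ a b : ℝ, 0 < a → a ≤ b →
      h a = (∫ s in Ioc a b, w s) + h b := by
    intro a b ha hab
    rw [hh, hh, ← setIntegral_union (Ioc_disjoint_Ioi le_rfl) measurableSet_Ioi
      (hwintIoc a b ha) (hwint' b (ha.trans_le hab)), Ioc_union_Ioi_eq_Ioi hab]
  have hIocNonneg : ∀ a b : ℝ, 0 < a → 0 ≤ ∫ s in Ioc a b, w s := fun a b ha =>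
    setIntegral_nonneg measurableSet_Ioc (fun x hx => (hw x (ha.trans hx.1)).le)
  have hIocUpper : ∀ a b : ℝ, 0 < a → a ≤ b → ∫ s in Ioc a b, w s ≤ (b - a) * w a := by
    intro a b ha hab
    have h1 : ∫ s in Ioc a b, w s ≤ ∫ _s in Ioc a b, w a :=
      setIntegral_mono_on (hwintIoc a b ha)
        (integrableOn_const measure_Ioc_lt_top.ne) measurableSet_Ioc
        (fun x hx => hwa ha (ha.trans hx.1) hx.1.le)
    have h2 : ∫ _s in Ioc a b, w a = (b - a) * w a := by
      simp [Real.volume_Ioc, ENNReal.toReal_ofReal (sub_nonneg.2 hab), hab]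
    linarith [h1.trans_eq h2]
  have hIocLower : ∀ a b : ℝ, 0 < a → a ≤ b → (b - a) * w b ≤ ∫ s in Ioc a b, w s := by
    intro a b ha hab
    have h1 : ∫ _s in Ioc a b, w b ≤ ∫ s in Ioc a b, w s :=
      setIntegral_mono_on (integrableOn_const measure_Ioc_lt_top.ne)
        (hwintIoc a b ha) measurableSet_Ioc
        (fun x hx => hwa (ha.trans hx.1) (ha.trans_le hab) hx.2)
    have h2 : ∫ _s in Ioc a b, w b = (b - a) * w b := by
      simp [Real.volume_Ioc, ENNReal.toReal_ofReal (sub_nonneg.2 hab), hab]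
    linarith [h2 ▸ h1]
  have hhNonneg : ∀ a : ℝ, 0 ≤ a → 0 ≤ h a := by
    intro a ha
    rw [hh]
    exact setIntegral_nonneg measurableSet_Ioi (fun x hx => (hw x (ha.trans_lt hx)).le)
  have hhpos : ∀ a : ℝ, 0 < a → 0 < h a := by
    intro a ha
    have h1 : h a = (∫ s in Ioc a (a + 1), w s) + h (a + 1) := hsplit a (a + 1) ha (by linarith)
    have h2 := hIocLower a (a + 1) ha (by linarith)
    have h3 : 0 < w (a + 1) := hw _ (by simp only [mem_Ioi]; linarith)
    have h4 : 0 ≤ h (a + 1) := hhNonneg _ (by linarith)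
    nlinarith
  have hmono : ∀ a b : ℝ, 0 < a → a ≤ b → h b ≤ h a := by
    intro a b ha hab
    have h1 := hsplit a b ha hab
    have h2 := hIocNonneg a b ha
    linarith
  -- upper estimate: h t / t ≤ 2 * 2^n * w t for t ≥ 1
  have hupper : ∀ t : ℝ, 1 ≤ t → h t / t ≤ (2 * 2 ^ n) * w t := by
    intro t ht
    have ht0 : (0:ℝ) < t := by linarith
    have hT1 : (1:ℝ) ≤ 2 ^ n := one_le_pow₀ (by norm_num)
    have hTt : t ≤ 2 ^ n * t := by nlinarith
    have h37 := h37a t (2 ^ n * t) ht hTt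
    have hTt' : (2:ℝ) ^ n * t / t = 2 ^ n := by field_simp
    rw [hTt'] at h37
    have hhT : 0 < h (2 ^ n * t) := hhpos _ (by positivity)
    have h1 : 2 * h (2 ^ n * t) ≤ h t := (le_div_iff₀ hhT).mp (hK.trans h37)
    have h2 := hsplit t (2 ^ n * t) ht0 hTt
    have h3 := hIocUpper t (2 ^ n * t) ht0 hTt
    have hwt : 0 < w t := hw t ht0
    rw [div_le_iff₀ ht0]
    nlinarith
  -- lower estimate: t * w t ≤ 2 * d₂ * h t for t ≥ 2
  have hlowerW : ∀ t : ℝ, 2 ≤ t → t * w t ≤ 2 * d₂ * h t := by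
    intro t ht
    have ht0 : (0:ℝ) < t := by linarith
    have hhalf : (0:ℝ) < t / 2 := by linarith
    have h1 := hsplit (t / 2) t hhalf (by linarith)
    have h2 := hIocLower (t / 2) t hhalf (by linarith)
    have h3 := h37b (t / 2) (by linarith)
    have ht2 : 2 * (t / 2) = t := by ring
    rw [ht2] at h3
    have hht : 0 < h t := hhpos t ht0
    have h4 : h (t / 2) ≤ d₂ * h t := (div_le_iff₀ hht).mp h3
    nlinarith [hw t ht0]
  have hlower : ∀ t : ℝ, 2 ≤ t → 1 / (2 * d₂) * w t ≤ h t / t := by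
    intro t ht
    have ht0 : (0:ℝ) < t := by linarith
    rw [le_div_iff₀ ht0]
    have key := hlowerW t ht
    have : 1 / (2 * d₂) * w t * t = t * w t / (2 * d₂) := by ring
    rw [this, div_le_iff₀ (by positivity)]
    nlinarith [hhpos t ht0]
  refine ⟨hupper, hlower, ?_, ?_, ?_⟩
  · -- g-inverse comparison
    intro ginv hg1 _hg2 t ht
    have ht0 : (0:ℝ) < t := by linarith
    have hht : 0 < h t := hhpos t ht0
    have hs₀pos : 0 < t / h t := div_pos ht0 hht
    have hgs₀ : g (t / h t) = t := by
      rw [hg]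
      apply le_antisymm
      · have hbdd : BddBelow (range fun u : Ioi (0:ℝ) => max (u:ℝ) (t / h t * h u)) := by
          refine ⟨0, ?_⟩
          rintro x ⟨u, rfl⟩
          exact le_trans u.2.le (le_max_left _ _)
        calc (⨅ u : Ioi (0:ℝ), max (u:ℝ) (t / h t * h u)) ≤ max t (t / h t * h t) :=
              ciInf_le hbdd ⟨t, ht0⟩
          _ = t := by rw [div_mul_cancel₀ t hht.ne', max_self]
      · apply le_ciInf
        rintro ⟨u, hu⟩
        rcases le_total t u with hc | hc
        · exact le_trans hc (le_max_left _ _)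
        · refine le_trans ?_ (le_max_right _ _)
          have hmu : h t ≤ h u := hmono u t hu hc
          calc t = t / h t * h t := (div_mul_cancel₀ t hht.ne').symm
            _ ≤ t / h t * h u := by nlinarith
    have hginvt : ginv t = t / h t := by
      have := hg1 (t / h t) hs₀pos
      rwa [hgs₀] at this
    have hone : 1 / ginv t = h t / t := by rw [hginvt, one_div_div]
    rw [hone]
    exact ⟨hlower t ht, hupper t (by linarith)⟩
  · -- condition (3.6), power bound
    intro s t hs hst
    have hs0 : (0:ℝ) < s := by linarith
    have ht0 : (0:ℝ) < t := lt_of_lt_of_le hs0 hst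
    have hws : 0 < w s := hw s hs0
    have hwt : 0 < w t := hw t ht0
    have hhs : 0 < h s := hhpos s hs0
    have hht : 0 < h t := hhpos t ht0
    have hts : (0:ℝ) < t / s := by positivity
    have hX : (0:ℝ) < (t / s) ^ α₂ := Real.rpow_pos_of_pos hts _
    set X := (t / s) ^ α₂ with hXdef
    have hrw : (t / s) ^ (1 + α₂) = (t / s) * X := by
      rw [hXdef, Real.rpow_add hts, Real.rpow_one]
    have A' : h s ≤ 2 * 2 ^ n * w s * s := (div_le_iff₀ hs0).mp (hupper s (by linarith))
    have B' : t * w t ≤ 2 * d₂ * h t := hlowerW t (le_trans hs hst)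
    have C' : c₂ * X * h t ≤ h s := (le_div_iff₀ hht).mp (h37a s t (by linarith) hst)
    have key : c₂ * t * X * w t ≤ 4 * d₂ * 2 ^ n * (s * w s) := by
      have e1 := mul_le_mul_of_nonneg_left B' (by positivity : (0:ℝ) ≤ c₂ * X)
      have e2 := mul_le_mul_of_nonneg_left C' (by positivity : (0:ℝ) ≤ 2 * d₂)
      have e3 := mul_le_mul_of_nonneg_left A' (by positivity : (0:ℝ) ≤ 2 * d₂)
      nlinarith
    rw [hrw, le_div_iff₀ hwt]
    have hD : (0:ℝ) < 4 * d₂ * 2 ^ n * s := by positivity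
    have e : c₂ / (4 * d₂ * 2 ^ n) * (t / s * X) * w t * (4 * d₂ * 2 ^ n * s)
        = c₂ * t * X * w t := by
      field_simp
    have key2 : c₂ / (4 * d₂ * 2 ^ n) * (t / s * X) * w t * (4 * d₂ * 2 ^ n * s)
        ≤ w s * (4 * d₂ * 2 ^ n * s) := by
      rw [e]; nlinarith
    exact le_of_mul_le_mul_right key2 hD
  · -- doubling of w
    intro s hs
    have hs0 : (0:ℝ) < s := by linarith
    have hw2s : 0 < w (2 * s) := hw (2 * s) (mem_Ioi.mpr (by positivity))
    have B' : s * w s ≤ 2 * d₂ * h s := hlowerW s hs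
    have hd : h s ≤ d₂ * h (2 * s) :=
      (div_le_iff₀ (hhpos (2 * s) (by positivity))).mp (h37b s (by linarith))
    have A' : h (2 * s) ≤ 2 * 2 ^ n * w (2 * s) * (2 * s) :=
      (div_le_iff₀ (by positivity)).mp (hupper (2 * s) (by linarith))
    rw [div_le_iff₀ hw2s]
    have key : s * w s ≤ s * (8 * d₂ ^ 2 * 2 ^ n * w (2 * s)) := by nlinarith
    have := le_of_mul_le_mul_left key hs0
    linarith
end

section
/- Let 𝐠:[0,∞)→[0,∞) be an increasing continuous bijection satisfying condition (3.8) with constants c,d>0 and 0<β<1. Set w(t)=1/𝐠⁻¹(t) for t>0, h(t)=∫_t^∞ w(s) ds (which is finite for t ≥ 1), and g(s)=inf_{t>0} max(t, s·h(t)). Then there exist constants c',d'>0 depending only on c,d,β such that c'·g(x) ≤ 𝐠(x) ≤ d'·g(x) for all x ≥ 1. -/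
open MeasureTheory Set
open scoped ENNReal

/-- Remark 3.7: if `𝐠` is an increasing continuous bijection of `[0,∞)`
satisfying the regularity condition (3.8), `w = 1/𝐠⁻¹`, `h(t) = ∫_t^∞ w`
(finite for `t ≥ 1`) and `g(s) = inf_{t>0} max(t, s·h(t))` (computed in
`[0,∞]` so that the convention `max(t, s·h(t)) = ∞` when `h(t) = ∞` holds),
then `g` is equivalent to `𝐠` on `[1,∞)`, with constants depending only on
the constants in (3.8). -/
theorem stmt_5 (c d β : ℝ) (hc : 0 < c) (hd : 0 < d) (hβ0 : 0 < β) (hβ1 : β < 1) :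
    ∃ c' d' : ℝ, 0 < c' ∧ 0 < d' ∧
      ∀ (G Ginv w : ℝ → ℝ) (h g : ℝ → ℝ≥0∞),
        StrictMonoOn G (Ici 0) → ContinuousOn G (Ici 0) → BijOn G (Ici 0) (Ici 0) →
        (∀ x ∈ Ici (0:ℝ), Ginv (G x) = x) →
        (∀ y ∈ Ici (0:ℝ), Ginv y ∈ Ici (0:ℝ) ∧ G (Ginv y) = y) →
        (∀ s t : ℝ, 1 ≤ s → s ≤ t → G t / G s ≤ d * (t / s) ^ β) →
        (∀ s : ℝ, 1 ≤ s → Ginv (2 * s) / Ginv s ≤ c) →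
        (∀ t : ℝ, 0 < t → w t = 1 / Ginv t) →
        (∀ t, h t = ∫⁻ s in Ioi t, ENNReal.ofReal (w s)) →
        (∀ s, g s = ⨅ t : Ioi (0:ℝ),
            max (ENNReal.ofReal (t : ℝ)) (ENNReal.ofReal s * h (t : ℝ))) →
        (∀ t : ℝ, 1 ≤ t → h t ≠ ⊤) ∧
        (∀ x : ℝ, 1 ≤ x →
          ENNReal.ofReal c' * g x ≤ ENNReal.ofReal (G x) ∧
          ENNReal.ofReal (G x) ≤ ENNReal.ofReal d' * g x) := by
  classical
  set K : ℝ := d ^ (1/β) * β / (1 - β) with hKdef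
  have hKpos : 0 < K :=
    div_pos (mul_pos (Real.rpow_pos_of_pos hd _) hβ0) (by linarith)
  have hM1K : (0:ℝ) < max 1 K := lt_of_lt_of_le one_pos (le_max_left _ _)
  refine ⟨(max 1 K)⁻¹, 2, inv_pos.mpr hM1K, two_pos, ?_⟩
  intro G Ginv w h g hGmono hGcont hGbij hGinvL hGinvR hGd hGc hw hh hg
  -- basic facts
  have hG0 : G 0 = 0 := by
    obtain ⟨x0, hx0, hGx0⟩ := hGbij.surjOn (show (0:ℝ) ∈ Ici 0 from self_mem_Ici)
    rcases eq_or_lt_of_le (mem_Ici.mp hx0) with hx | hx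
    · rw [← hx] at hGx0; exact hGx0
    · have h1 : G 0 < G x0 := hGmono (mem_Ici.mpr (le_refl 0)) hx0 hx
      have h0 : (0:ℝ) ≤ G 0 := hGbij.mapsTo self_mem_Ici
      rw [hGx0] at h1; linarith
  have hGinvMono : ∀ y z : ℝ, 0 ≤ y → y ≤ z → Ginv y ≤ Ginv z := by
    intro y z hy hyz
    by_contra hab
    push_neg at hab
    have h1 := (hGinvR y hy).2
    have h2 := (hGinvR z (hy.trans hyz)).2
    have h3 := hGmono (hGinvR z (hy.trans hyz)).1 (hGinvR y hy).1 hab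
    rw [h1, h2] at h3; linarith
  have hGinvPos : ∀ y : ℝ, 0 < y → 0 < Ginv y := by
    intro y hy
    rcases eq_or_lt_of_le (mem_Ici.mp (hGinvR y hy.le).1) with h1 | h1
    · exfalso
      have h2 := (hGinvR y hy.le).2
      rw [← h1, hG0] at h2; linarith
    · exact h1
  -- Lemma B : upper bound for h at points with large inverse image
  have hB : ∀ u : ℝ, 0 < u → 1 ≤ Ginv u →
      h u ≤ ENNReal.ofReal (K * u / Ginv u) := by
    intro u hu hxu
    have hxpos : 0 < Ginv u := lt_of_lt_of_le one_pos hxu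
    have hGx : G (Ginv u) = u := (hGinvR u hu.le).2
    set x : ℝ := Ginv u with hxdef
    set C : ℝ := (d * u) ^ (1/β) / x with hCdef
    have hdu : 0 < d * u := mul_pos hd hu
    have hCpos : 0 < C := div_pos (Real.rpow_pos_of_pos hdu _) hxpos
    have hβinv : (1:ℝ) < 1/β := one_lt_one_div hβ0 hβ1
    have hlt : -(1/β) < -1 := by linarith
    have hpt : ∀ s ∈ Ioi u, ENNReal.ofReal (w s)
        ≤ ENNReal.ofReal (C * s ^ (-(1/β))) := by
      intro s hs
      have hs0 : 0 < s := hu.trans hs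
      rw [hw s hs0]
      apply ENNReal.ofReal_le_ofReal
      have hGis : G (Ginv s) = s := (hGinvR s hs0.le).2
      have hxle : x ≤ Ginv s := hGinvMono u s hu.le (le_of_lt hs)
      have hGinvs : 0 < Ginv s := hGinvPos s hs0
      have h3 : s / u ≤ d * (Ginv s / x) ^ β := by
        have h4 := hGd x (Ginv s) hxu hxle
        rwa [hGis, hGx] at h4
      have h4 : s / (d * u) ≤ (Ginv s / x) ^ β := by
        rw [div_le_iff₀ hu] at h3
        rw [div_le_iff₀ hdu]
        nlinarith [h3]
      have h5 : (s / (d * u)) ^ (1/β) ≤ Ginv s / x := by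
        have hb : (0:ℝ) ≤ Ginv s / x := le_of_lt (div_pos hGinvs hxpos)
        calc (s / (d * u)) ^ (1/β) ≤ ((Ginv s / x) ^ β) ^ (1/β) :=
              Real.rpow_le_rpow (le_of_lt (div_pos hs0 hdu)) h4 (by positivity)
          _ = Ginv s / x := by
              rw [← Real.rpow_mul hb, mul_one_div_cancel hβ0.ne', Real.rpow_one]
      have hP : (0:ℝ) < s ^ (1/β) := Real.rpow_pos_of_pos hs0 _
      have hQ : (0:ℝ) < (d * u) ^ (1/β) := Real.rpow_pos_of_pos hdu _
      have h6 : x * (s ^ (1/β) / (d * u) ^ (1/β)) ≤ Ginv s := by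
        rw [← Real.div_rpow hs0.le hdu.le]
        calc x * (s / (d * u)) ^ (1/β) ≤ x * (Ginv s / x) := by
              apply mul_le_mul_of_nonneg_left h5 hxpos.le
          _ = Ginv s := by field_simp
      have h7 : 1 / Ginv s ≤ 1 / (x * (s ^ (1/β) / (d * u) ^ (1/β))) :=
        one_div_le_one_div_of_le (by positivity) h6
      calc 1 / Ginv s ≤ 1 / (x * (s ^ (1/β) / (d * u) ^ (1/β))) := h7
        _ = C * s ^ (-(1/β)) := by
            rw [Real.rpow_neg hs0.le, hCdef]
            field_simp
    have hint : IntegrableOn (fun s : ℝ => C * s ^ (-(1/β))) (Ioi u) :=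
      (integrableOn_Ioi_rpow_of_lt hlt hu).const_mul C
    have hae : 0 ≤ᵐ[volume.restrict (Ioi u)] fun s : ℝ => C * s ^ (-(1/β)) := by
      filter_upwards [ae_restrict_mem measurableSet_Ioi] with s hs
      exact mul_nonneg hCpos.le (Real.rpow_nonneg (le_of_lt (hu.trans hs)) _)
    have hval : ∫ s in Ioi u, C * s ^ (-(1/β)) = C * (-u ^ (-(1/β) + 1) / (-(1/β) + 1)) := by
      rw [MeasureTheory.integral_const_mul, integral_Ioi_rpow_of_lt hlt hu]
    have hexp : u ^ (1/β) * u ^ (-(1/β) + 1) = u := by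
      rw [← Real.rpow_add hu, show 1/β + (-(1/β) + 1) = 1 by ring, Real.rpow_one]
    have hne : -(1/β) + 1 < 0 := by linarith
    have hval2 : C * (-u ^ (-(1/β) + 1) / (-(1/β) + 1)) = K * u / x := by
      have hene : -(1/β) + 1 ≠ 0 := ne_of_lt hne
      have hβne : β ≠ 0 := hβ0.ne'
      have h1βne : (1:ℝ) - β ≠ 0 := by linarith
      have he2 : -u ^ (-(1/β) + 1) / (-(1/β) + 1) = u ^ (-(1/β) + 1) * (β / (1 - β)) := by
        rw [div_eq_iff hene]
        field_simp
        ring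
      rw [hCdef, hKdef, Real.mul_rpow hd.le hu.le, he2]
      calc d ^ (1/β) * u ^ (1/β) / x * (u ^ (-(1/β) + 1) * (β / (1 - β)))
          = d ^ (1/β) * (u ^ (1/β) * u ^ (-(1/β) + 1)) * β / (1 - β) / x := by ring
        _ = d ^ (1/β) * u * β / (1 - β) / x := by rw [hexp]
        _ = d ^ (1/β) * β / (1 - β) * u / x := by ring
    calc h u = ∫⁻ s in Ioi u, ENNReal.ofReal (w s) := hh u
      _ ≤ ∫⁻ s in Ioi u, ENNReal.ofReal (C * s ^ (-(1/β))) :=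
          setLIntegral_mono' measurableSet_Ioi hpt
      _ = ENNReal.ofReal (∫ s in Ioi u, C * s ^ (-(1/β))) :=
          (MeasureTheory.ofReal_integral_eq_lintegral_ofReal hint hae).symm
      _ = ENNReal.ofReal (K * u / x) := by rw [hval, hval2]
  constructor
  · -- finiteness of h on [1,∞)
    intro t ht
    have ht0 : (0:ℝ) < t := lt_of_lt_of_le one_pos ht
    set a : ℝ := max t (G 1) with hadef
    have hta : t ≤ a := le_max_left _ _
    have hG1nn : (0:ℝ) ≤ G 1 := hGbij.mapsTo (by norm_num)
    have ha0 : (0:ℝ) < a := lt_of_lt_of_le ht0 hta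
    have hGinva : 1 ≤ Ginv a := by
      have h1 := hGinvMono (G 1) a hG1nn (le_max_right _ _)
      rwa [hGinvL 1 (by norm_num)] at h1
    have hGinv1 : 0 < Ginv 1 := hGinvPos 1 one_pos
    have hsplit : h t = (∫⁻ s in Ioc t a, ENNReal.ofReal (w s))
        + ∫⁻ s in Ioi a, ENNReal.ofReal (w s) := by
      rw [hh t, ← Ioc_union_Ioi_eq_Ioi hta,
        lintegral_union measurableSet_Ioi (Ioc_disjoint_Ioi le_rfl)]
    have hp1 : (∫⁻ s in Ioc t a, ENNReal.ofReal (w s))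
        ≤ ENNReal.ofReal (1 / Ginv 1) * ENNReal.ofReal (a - t) := by
      calc (∫⁻ s in Ioc t a, ENNReal.ofReal (w s))
          ≤ ∫⁻ _ in Ioc t a, ENNReal.ofReal (1 / Ginv 1) := by
            refine setLIntegral_mono' measurableSet_Ioc (fun s hs => ?_)
            rw [hw s (ht0.trans hs.1)]
            apply ENNReal.ofReal_le_ofReal
            apply one_div_le_one_div_of_le hGinv1
            exact hGinvMono 1 s (by norm_num) (ht.trans hs.1.le)
        _ = ENNReal.ofReal (1 / Ginv 1) * volume (Ioc t a) := setLIntegral_const _ _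
        _ = ENNReal.ofReal (1 / Ginv 1) * ENNReal.ofReal (a - t) := by
            rw [Real.volume_Ioc]
    have hp2 : (∫⁻ s in Ioi a, ENNReal.ofReal (w s)) ≤ ENNReal.ofReal (K * a / Ginv a) := by
      rw [← hh a]; exact hB a ha0 hGinva
    rw [hsplit]
    apply ne_top_of_le_ne_top (b := ENNReal.ofReal (1 / Ginv 1) * ENNReal.ofReal (a - t)
      + ENNReal.ofReal (K * a / Ginv a))
    · exact ENNReal.add_ne_top.mpr
        ⟨ENNReal.mul_ne_top ENNReal.ofReal_ne_top ENNReal.ofReal_ne_top, ENNReal.ofReal_ne_top⟩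
    · exact add_le_add hp1 hp2
  · -- the equivalence
    intro x hx
    have hx0 : (0:ℝ) < x := lt_of_lt_of_le one_pos hx
    have hGxpos : 0 < G x := by
      have h1 := hGmono (mem_Ici.mpr (le_refl 0)) (mem_Ici.mpr (le_of_lt hx0)) hx0
      rwa [hG0] at h1
    have hGinvGx : Ginv (G x) = x := hGinvL x hx0.le
    constructor
    · -- lower bound
      have hgle : g x ≤ ENNReal.ofReal (max 1 K * G x) := by
        rw [hg x]
        refine le_trans (iInf_le _ ⟨G x, hGxpos⟩) ?_
        have hhb : h (G x) ≤ ENNReal.ofReal (K * G x / x) := by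
          have h1 := hB (G x) hGxpos (by rw [hGinvGx]; exact hx)
          rwa [hGinvGx] at h1
        apply max_le
        · exact ENNReal.ofReal_le_ofReal
            (by nlinarith [le_max_left (1:ℝ) K])
        · calc ENNReal.ofReal x * h (G x)
              ≤ ENNReal.ofReal x * ENNReal.ofReal (K * G x / x) := mul_le_mul_right hhb _
            _ = ENNReal.ofReal (x * (K * G x / x)) := (ENNReal.ofReal_mul hx0.le).symm
            _ ≤ ENNReal.ofReal (max 1 K * G x) := by
                apply ENNReal.ofReal_le_ofReal
                rw [mul_comm x, div_mul_cancel₀ _ hx0.ne']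
                nlinarith [le_max_right (1:ℝ) K]
      calc ENNReal.ofReal (max 1 K)⁻¹ * g x
          ≤ ENNReal.ofReal (max 1 K)⁻¹ * ENNReal.ofReal (max 1 K * G x) :=
            mul_le_mul_right hgle _
        _ = ENNReal.ofReal ((max 1 K)⁻¹ * (max 1 K * G x)) :=
            (ENNReal.ofReal_mul (inv_nonneg.mpr hM1K.le)).symm
        _ = ENNReal.ofReal (G x) := by
            rw [← mul_assoc, inv_mul_cancel₀ hM1K.ne', one_mul]
    · -- upper bound
      have hclaim : ENNReal.ofReal (G x / 2) ≤ g x := by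
        rw [hg x]
        refine le_iInf ?_
        rintro ⟨t, ht⟩
        by_cases hcase : G x / 2 ≤ t
        · exact le_trans (ENNReal.ofReal_le_ofReal hcase) (le_max_left _ _)
        · push_neg at hcase
          refine le_trans ?_ (le_max_right _ _)
          have ht0 : (0:ℝ) < t := ht
          have hlow : ENNReal.ofReal (1/x) * ENNReal.ofReal (G x - t) ≤ h t := by
            rw [hh t]
            calc ENNReal.ofReal (1/x) * ENNReal.ofReal (G x - t)
                = ∫⁻ _ in Ioc t (G x), ENNReal.ofReal (1/x) := by
                  rw [setLIntegral_const, Real.volume_Ioc]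
              _ ≤ ∫⁻ s in Ioc t (G x), ENNReal.ofReal (w s) := by
                  refine setLIntegral_mono' measurableSet_Ioc (fun s hs => ?_)
                  rw [hw s (ht0.trans hs.1)]
                  apply ENNReal.ofReal_le_ofReal
                  apply one_div_le_one_div_of_le (hGinvPos s (ht0.trans hs.1))
                  calc Ginv s ≤ Ginv (G x) :=
                        hGinvMono s (G x) (le_of_lt (ht0.trans hs.1)) hs.2
                    _ = x := hGinvGx
              _ ≤ ∫⁻ s in Ioi t, ENNReal.ofReal (w s) :=
                  lintegral_mono_set Ioc_subset_Ioi_self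
          calc ENNReal.ofReal (G x / 2) ≤ ENNReal.ofReal (G x - t) :=
                ENNReal.ofReal_le_ofReal (by linarith)
            _ = ENNReal.ofReal x * (ENNReal.ofReal (1/x) * ENNReal.ofReal (G x - t)) := by
                rw [← ENNReal.ofReal_mul (by positivity), ← ENNReal.ofReal_mul hx0.le]
                congr 1
                field_simp
            _ ≤ ENNReal.ofReal x * h t := mul_le_mul_right hlow _
      calc ENNReal.ofReal (G x) = ENNReal.ofReal 2 * ENNReal.ofReal (G x / 2) := by
            rw [← ENNReal.ofReal_mul (by norm_num)]
            congr 1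
            ring
        _ ≤ ENNReal.ofReal 2 * g x := mul_le_mul_right hclaim _
end

section
/- Let w:(0,∞)→[0,∞) be nonincreasing with ∫_1^∞ w(s) ds < ∞. Define φ:[0,∞)→[0,∞) by φ(0)=0 and φ(t)=t²·∫_{t^{-2}}^∞ w(s) ds for t>0. Then φ is convex on [0,∞) and continuous at 0 (so φ is an Orlicz function). -/
open MeasureTheory Set Filter Topology

set_option maxHeartbeats 1000000

/-- The convexity claim of Section 3: for a nonincreasing weight `w` on
`(0,∞)` with `∫_1^∞ w < ∞`, the function `φ(t) = t² ∫_{t⁻²}^∞ w(s) ds`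
(with `φ(0) = 0`) is convex on `[0,∞)` and continuous at `0`, i.e. an
Orlicz function. -/
theorem stmt_6 (w φ : ℝ → ℝ)
    (hw_nonneg : ∀ t ∈ Ioi (0:ℝ), 0 ≤ w t)
    (hw_anti : AntitoneOn w (Ioi 0))
    (hw_int : IntegrableOn w (Ioi 1))
    (hφ0 : φ 0 = 0)
    (hφ : ∀ t : ℝ, 0 < t → φ t = t ^ 2 * ∫ s in Ioi ((t ^ 2)⁻¹), w s) :
    ConvexOn ℝ (Ici 0) φ ∧ ContinuousWithinAt φ (Ici 0) 0 := by
  -- integrability of `w` on `Ioi c` for every `c > 0`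
  have hIntC : ∀ c : ℝ, 0 < c → IntegrableOn w (Ioi c) := by
    intro c hc
    rcases le_or_gt 1 c with h1 | h1
    · exact hw_int.mono_set (Ioi_subset_Ioi h1)
    · rw [← Ioc_union_Ioi_eq_Ioi h1.le]
      refine IntegrableOn.union ?_ hw_int
      have hcomp : IntegrableOn w (Icc c 1) :=
        AntitoneOn.integrableOn_isCompact isCompact_Icc
          (hw_anti.mono (fun s hs => lt_of_lt_of_le hc hs.1))
      exact hcomp.mono_set Ioc_subset_Icc_self
  have hIntIoc : ∀ u v : ℝ, 0 < u → IntegrableOn w (Ioc u v) := fun u v hu =>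
    (hIntC u hu).mono_set Ioc_subset_Ioi_self
  -- splitting the tail integral
  have hsplit : ∀ u v : ℝ, 0 < u → u ≤ v →
      (∫ s in Ioi u, w s) = (∫ s in Ioc u v, w s) + ∫ s in Ioi v, w s := by
    intro u v hu huv
    rw [← setIntegral_union (Ioc_disjoint_Ioi le_rfl) measurableSet_Ioi
      (hIntIoc u v hu) (hIntC v (hu.trans_le huv)), Ioc_union_Ioi_eq_Ioi huv]
  -- nonnegativity of tail integrals
  have htail_nonneg : ∀ u : ℝ, 0 < u → 0 ≤ ∫ s in Ioi u, w s := by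
    intro u hu
    exact setIntegral_nonneg measurableSet_Ioi fun s hs => hw_nonneg s (hu.trans hs)
  have hIoc_nonneg : ∀ u v : ℝ, 0 < u → 0 ≤ ∫ s in Ioc u v, w s := by
    intro u v hu
    exact setIntegral_nonneg measurableSet_Ioc fun s hs => hw_nonneg s (hu.trans hs.1)
  -- bounds for the integral over `Ioc u v`
  have hupper : ∀ u v : ℝ, 0 < u → u ≤ v → (∫ s in Ioc u v, w s) ≤ (v - u) * w u := by
    intro u v hu huv
    have h1 : (∫ s in Ioc u v, w s) ≤ ∫ _ in Ioc u v, w u :=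
      setIntegral_mono_on (hIntIoc u v hu)
        (integrableOn_const measure_Ioc_lt_top.ne) measurableSet_Ioc
        (fun s hs => hw_anti hu (hu.trans hs.1) hs.1.le)
    have h2 : (∫ _ in Ioc u v, w u) = (v - u) * w u := by
      simp [Real.volume_Ioc, ENNReal.toReal_ofReal (sub_nonneg.2 huv), huv]
    linarith
  have hlower : ∀ u v : ℝ, 0 < u → u ≤ v → (v - u) * w v ≤ ∫ s in Ioc u v, w s := by
    intro u v hu huv
    have h1 : (∫ _ in Ioc u v, w v) ≤ ∫ s in Ioc u v, w s :=
      setIntegral_mono_on (integrableOn_const measure_Ioc_lt_top.ne)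
        (hIntIoc u v hu) measurableSet_Ioc
        (fun s hs => hw_anti (hu.trans hs.1) (hu.trans_le huv) hs.2)
    have h2 : (∫ _ in Ioc u v, w v) = (v - u) * w v := by
      simp [Real.volume_Ioc, ENNReal.toReal_ofReal (sub_nonneg.2 huv), huv]
    linarith
  constructor
  · -- convexity
    refine convexOn_of_slope_mono_adjacent (convex_Ici 0) ?_
    intro x y z hx hz hxy hyz
    have hx0 : (0:ℝ) ≤ x := hx
    have hy0 : (0:ℝ) < y := lt_of_le_of_lt hx0 hxy
    have hz0 : (0:ℝ) < z := hy0.trans hyz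
    set B : ℝ := (y ^ 2)⁻¹ with hB
    set C : ℝ := (z ^ 2)⁻¹ with hC
    have hBpos : 0 < B := by positivity
    have hCpos : 0 < C := by positivity
    have hCB : C ≤ B := by
      apply inv_anti₀ (by positivity)
      nlinarith
    set hhB : ℝ := ∫ s in Ioi B, w s with hhBdef
    set hhC : ℝ := ∫ s in Ioi C, w s with hhCdef
    set IB : ℝ := ∫ s in Ioc C B, w s with hIBdef
    have hCB' : hhC = IB + hhB := hsplit C B hCpos hCB
    have hhC_nonneg : 0 ≤ hhC := htail_nonneg C hCpos
    have hIB_nonneg : 0 ≤ IB := hIoc_nonneg C B hCpos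
    have hwB_nonneg : 0 ≤ w B := hw_nonneg B hBpos
    have hIB_lower : (B - C) * w B ≤ IB := hlower C B hCpos hCB
    have hφy : φ y = y ^ 2 * hhB := hφ y hy0
    have hφz : φ z = z ^ 2 * hhC := hφ z hz0
    have hBC : B - C = (z ^ 2 - y ^ 2) / (y ^ 2 * z ^ 2) := by
      rw [hB, hC]; field_simp
    have hzy' : z - y ≠ 0 := sub_ne_zero.2 (ne_of_gt hyz)
    have hhBeq : hhB = hhC - IB := by linarith
    have eq2 : (φ z - φ y) / (z - y) = (y + z) * hhC + y ^ 2 / (z - y) * IB := by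
      rw [hφz, hφy, hhBeq]
      field_simp
      ring
    have s2 : (y + z) / z ^ 2 * w B ≤ y ^ 2 / (z - y) * IB := by
      have hpos : (0:ℝ) < y ^ 2 / (z - y) := div_pos (by positivity) (by linarith)
      have h := mul_le_mul_of_nonneg_left hIB_lower hpos.le
      have h2 : y ^ 2 / (z - y) * ((B - C) * w B) = (y + z) / z ^ 2 * w B := by
        rw [hBC]; field_simp; ring
      linarith
    rcases eq_or_lt_of_le hx0 with hx0' | hx0'
    · -- x = 0
      rw [← hx0', hφ0, eq2]
      have eq1 : (φ y - 0) / (y - 0) = y * hhB := by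
        rw [hφy]; simp only [sub_zero]; rw [pow_two, mul_assoc, mul_div_cancel_left₀ _ hy0.ne']
      rw [eq1, hhBeq]
      have h1 : 0 ≤ y * IB := mul_nonneg hy0.le hIB_nonneg
      have h2 : 0 ≤ z * hhC := mul_nonneg hz0.le hhC_nonneg
      have h3 : 0 ≤ y ^ 2 / (z - y) * IB :=
        mul_nonneg (div_nonneg (by positivity) (by linarith)) hIB_nonneg
      nlinarith
    · -- 0 < x
      set A : ℝ := (x ^ 2)⁻¹ with hA
      have hApos : 0 < A := by positivity
      have hBA : B ≤ A := by
        apply inv_anti₀ (by positivity)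
        nlinarith
      set IA : ℝ := ∫ s in Ioc B A, w s with hIAdef
      have hBA' : (∫ s in Ioi A, w s) = hhB - IA := by
        have := hsplit B A hBpos hBA
        linarith
      have hIA_upper : IA ≤ (A - B) * w B := hupper B A hBpos hBA
      have hφx : φ x = x ^ 2 * ∫ s in Ioi A, w s := hφ x hx0'
      have hAB : A - B = (y ^ 2 - x ^ 2) / (x ^ 2 * y ^ 2) := by
        rw [hA, hB]; field_simp
      have hyx' : y - x ≠ 0 := sub_ne_zero.2 (ne_of_gt hxy)
      have eq1 : (φ y - φ x) / (y - x) = (x + y) * hhB + x ^ 2 / (y - x) * IA := by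
        rw [hφy, hφx, hBA']
        field_simp
        ring
      have s1 : x ^ 2 / (y - x) * IA ≤ (x + y) / y ^ 2 * w B := by
        have hpos : (0:ℝ) < x ^ 2 / (y - x) := div_pos (by positivity) (by linarith)
        have h := mul_le_mul_of_nonneg_left hIA_upper hpos.le
        have h2 : x ^ 2 / (y - x) * ((A - B) * w B) = (x + y) / y ^ 2 * w B := by
          rw [hAB]; field_simp; ring
        linarith
      have s3 : (x + y) * ((B - C) * w B) ≤ (x + y) * IB :=
        mul_le_mul_of_nonneg_left hIB_lower (by linarith)
      have s4 : (x + y) * ((B - C) * w B) = (x + y) / y ^ 2 * w B - (x + y) / z ^ 2 * w B := by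
        rw [hBC]; field_simp
      have s5 : (x + y) * hhC ≤ (y + z) * hhC :=
        mul_le_mul_of_nonneg_right (by linarith) hhC_nonneg
      have s6 : (x + y) / z ^ 2 * w B ≤ (y + z) / z ^ 2 * w B :=
        mul_le_mul_of_nonneg_right
          ((div_le_div_iff_of_pos_right (by positivity)).2 (by linarith)) hwB_nonneg
      have eqA : (x + y) * hhB = (x + y) * hhC - (x + y) * IB := by
        rw [hhBeq]; ring
      rw [eq1, eq2]
      linarith
  · -- continuity at zero
    have hC0 : Tendsto (fun t : ℝ => t ^ 2 * ∫ s in Ioi (1:ℝ), w s) (nhdsWithin 0 (Ici 0)) (nhds 0) := by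
      have hc : Continuous fun t : ℝ => t ^ 2 * ∫ s in Ioi (1:ℝ), w s := by continuity
      have h : Tendsto (fun t : ℝ => t ^ 2 * ∫ s in Ioi (1:ℝ), w s) (nhdsWithin 0 (Ici 0))
          (nhds ((0:ℝ) ^ 2 * ∫ s in Ioi (1:ℝ), w s)) :=
        (hc.tendsto 0).mono_left nhdsWithin_le_nhds
      simpa using h
    have hmem : Ico (0:ℝ) 1 ∈ nhdsWithin (0:ℝ) (Ici 0) := by
      rw [← Ici_inter_Iio]
      exact inter_mem_nhdsWithin _ (Iio_mem_nhds one_pos)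
    rw [ContinuousWithinAt, hφ0]
    apply squeeze_zero' (Filter.eventually_of_mem hmem ?_) (Filter.eventually_of_mem hmem ?_) hC0
    · intro t ht
      rcases eq_or_lt_of_le ht.1 with h0 | h0
      · simp [← h0, hφ0]
      · rw [hφ t h0]
        exact mul_nonneg (by positivity) (htail_nonneg _ (by positivity))
    · intro t ht
      rcases eq_or_lt_of_le ht.1 with h0 | h0
      · rw [← h0, hφ0]
        norm_num
      · rw [hφ t h0]
        have h1le : (1:ℝ) ≤ (t ^ 2)⁻¹ := by
          rw [le_inv_comm₀ one_pos (by positivity)]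
          nlinarith [ht.2]
        have := hsplit 1 ((t^2)⁻¹) one_pos h1le
        have h2 : (∫ s in Ioi ((t^2)⁻¹), w s) ≤ ∫ s in Ioi (1:ℝ), w s := by
          have := hIoc_nonneg 1 ((t^2)⁻¹) one_pos
          linarith
        exact mul_le_mul_of_nonneg_left h2 (by positivity)
end

section
/- Let (w_c,w_r) be a pair of weights on ℝ satisfying condition (3.1). Then h_r(t) ≤ 𝔥(t) for every t ≥ 0, and 𝔥(1+t) ≤ h_r(t) for every t ≥ 0. -/
open MeasureTheory Set
open scoped ENNReal

/-- Condition (3.1) for a pair of strictly positive weights `(w_c, w_r)` on `ℝ`: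
`w_c = 1` on `(0,∞)`, `w_c` is nondecreasing and left-continuous with
`∫_{-∞}^0 w_c = 1`; `w_r = 1` on `(-∞,0)`, `w_r` is nonincreasing and
right-continuous with `∫_0^∞ w_r = 1`. -/
structure Weight31 (wc wr : ℝ → ℝ) : Prop where
  wc_pos : ∀ s, 0 < wc s
  wr_pos : ∀ s, 0 < wr s
  wc_one : ∀ s : ℝ, 0 < s → wc s = 1
  wc_mono : Monotone wc
  wc_lc : ∀ t : ℝ, ContinuousWithinAt wc (Iic t) t
  wc_int : IntegrableOn wc (Iic 0)
  wc_total : (∫ s in Iic (0:ℝ), wc s) = 1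
  wr_one : ∀ s : ℝ, s < 0 → wr s = 1
  wr_anti : Antitone wr
  wr_rc : ∀ t : ℝ, ContinuousWithinAt wr (Ici t) t
  wr_int : IntegrableOn wr (Ici 0)
  wr_total : (∫ s in Ici (0:ℝ), wr s) = 1

/-- The two inequalities from the start of the proof of Lemma 3.4:
`h_r(t) ≤ 𝔥(t)` and `𝔥(1+t) ≤ h_r(t)` for every `t ≥ 0`, where
`h_r(t) = ∫_t^∞ w_r` and
`𝔥(t) = inf{∫_{ℝ∖A} w_r : A measurable, ∫_A w_c ≤ t}`. -/
theorem stmt_8 (wc wr : ℝ → ℝ) (hw : Weight31 wc wr)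
    (hr : ℝ → ℝ) (hhr : ∀ t, hr t = ∫ s in Ioi t, wr s)
    (H : ℝ → ℝ≥0∞)
    (hH : ∀ t : ℝ, H t = sInf {x : ℝ≥0∞ | ∃ A : Set ℝ, MeasurableSet A ∧
        (∫⁻ s in A, ENNReal.ofReal (wc s)) ≤ ENNReal.ofReal t ∧
        x = ∫⁻ s in Aᶜ, ENNReal.ofReal (wr s)}) :
    ∀ t : ℝ, 0 ≤ t →
      ENNReal.ofReal (hr t) ≤ H t ∧ H (1 + t) ≤ ENNReal.ofReal (hr t) := by
  have mwc : Measurable wc := hw.wc_mono.measurable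
  have mwr : Measurable wr := hw.wr_anti.measurable
  have mWc : Measurable fun s => ENNReal.ofReal (wc s) :=
    ENNReal.measurable_ofReal.comp mwc
  have mWr : Measurable fun s => ENNReal.ofReal (wr s) :=
    ENNReal.measurable_ofReal.comp mwr
  intro t ht
  -- `ofReal (hr t)` as a lower Lebesgue integral
  have hIoi : Ioi t ⊆ Ici (0 : ℝ) := fun s hs => le_trans ht (le_of_lt hs)
  have hint_r : IntegrableOn wr (Ioi t) := hw.wr_int.mono_set hIoi
  have hhr' : ENNReal.ofReal (hr t) = ∫⁻ s in Ioi t, ENNReal.ofReal (wr s) := by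
    rw [hhr]
    exact ofReal_integral_eq_lintegral_ofReal hint_r
      (Filter.Eventually.of_forall fun s => (hw.wr_pos s).le)
  -- volume of Ioc 0 t
  have hvol : volume (Ioc (0 : ℝ) t) = ENNReal.ofReal t := by
    rw [Real.volume_Ioc, sub_zero]
  constructor
  · -- h_r(t) ≤ 𝔥(t)
    rw [hH]
    refine le_sInf ?_
    rintro x ⟨A, hA, hAint, rfl⟩
    rw [hhr']
    set c := ENNReal.ofReal (wr t) with hc
    -- the wc-integral over A ∩ Ioi t equals the Lebesgue measure
    have hm2 : (∫⁻ s in A ∩ Ioi t, ENNReal.ofReal (wc s)) = volume (A ∩ Ioi t) := by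
      rw [setLIntegral_congr_fun (hA.inter measurableSet_Ioi)
        (fun s hs => ?_), setLIntegral_one]
      rw [hw.wc_one s (lt_of_le_of_lt ht hs.2), ENNReal.ofReal_one]
    have hm1 : (∫⁻ s in A ∩ Ioc 0 t, ENNReal.ofReal (wc s)) = volume (A ∩ Ioc 0 t) := by
      rw [setLIntegral_congr_fun (hA.inter measurableSet_Ioc)
        (fun s hs => ?_), setLIntegral_one]
      rw [hw.wc_one s hs.2.1, ENNReal.ofReal_one]
    -- m₁ + m₂ ≤ t
    have hdisj1 : Disjoint (A ∩ Ioc 0 t) (A ∩ Ioi t) := by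
      refine Disjoint.mono inter_subset_right inter_subset_right ?_
      exact Ioc_disjoint_Ioi le_rfl
    have hsum : volume (A ∩ Ioc 0 t) + volume (A ∩ Ioi t) ≤ ENNReal.ofReal t := by
      rw [← hm1, ← hm2, ← lintegral_union (hA.inter measurableSet_Ioi) hdisj1]
      exact le_trans (lintegral_mono_set (union_subset inter_subset_left inter_subset_left))
        hAint
    have hm1top : volume (A ∩ Ioc 0 t) ≠ ⊤ :=
      ne_top_of_le_ne_top ENNReal.ofReal_ne_top (le_trans le_self_add hsum)
    -- μ(A ∩ Ioc 0 t) + μ(Ioc 0 t \ A) = μ(Ioc 0 t) = ofReal t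
    have hmeq : volume (A ∩ Ioc 0 t) + volume (Ioc 0 t \ A) = ENNReal.ofReal t := by
      rw [inter_comm, measure_inter_add_diff _ hA, hvol]
    -- hence m₂ ≤ μ(Ioc 0 t \ A)
    have hm2le : volume (A ∩ Ioi t) ≤ volume (Ioc 0 t \ A) := by
      rw [← hmeq] at hsum
      exact (ENNReal.add_le_add_iff_left hm1top).mp hsum
    -- wr integral over A ∩ Ioi t is ≤ c * m₂
    have hub : (∫⁻ s in A ∩ Ioi t, ENNReal.ofReal (wr s)) ≤ c * volume (A ∩ Ioi t) := by
      calc (∫⁻ s in A ∩ Ioi t, ENNReal.ofReal (wr s))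
          ≤ ∫⁻ _ in A ∩ Ioi t, c := by
            refine setLIntegral_mono measurable_const fun s hs => ?_
            exact ENNReal.ofReal_le_ofReal (hw.wr_anti (le_of_lt hs.2))
        _ = c * volume (A ∩ Ioi t) := setLIntegral_const _ _
    -- wr integral over Ioc 0 t \ A is ≥ c * μ(Ioc 0 t \ A)
    have hlb : c * volume (Ioc 0 t \ A) ≤ ∫⁻ s in Ioc 0 t \ A, ENNReal.ofReal (wr s) := by
      calc c * volume (Ioc 0 t \ A) = ∫⁻ _ in Ioc 0 t \ A, c :=
            (setLIntegral_const _ _).symm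
        _ ≤ ∫⁻ s in Ioc 0 t \ A, ENNReal.ofReal (wr s) := by
            refine setLIntegral_mono mWr fun s hs => ?_
            exact ENNReal.ofReal_le_ofReal (hw.wr_anti hs.1.2)
    -- split Ioi t by A
    have hsplit : (∫⁻ s in Ioi t, ENNReal.ofReal (wr s))
        = (∫⁻ s in A ∩ Ioi t, ENNReal.ofReal (wr s))
          + ∫⁻ s in Aᶜ ∩ Ioi t, ENNReal.ofReal (wr s) := by
      rw [← lintegral_union (hA.compl.inter measurableSet_Ioi)
        (by exact Disjoint.mono inter_subset_left inter_subset_left disjoint_compl_right)]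
      rw [← union_inter_distrib_right, union_compl_self, univ_inter]
    -- combine
    have hdisj2 : Disjoint (Ioc 0 t \ A) (Aᶜ ∩ Ioi t) := by
      refine Disjoint.mono diff_subset inter_subset_right ?_
      exact Ioc_disjoint_Ioi le_rfl
    calc (∫⁻ s in Ioi t, ENNReal.ofReal (wr s))
        = (∫⁻ s in A ∩ Ioi t, ENNReal.ofReal (wr s))
          + ∫⁻ s in Aᶜ ∩ Ioi t, ENNReal.ofReal (wr s) := hsplit
      _ ≤ c * volume (A ∩ Ioi t) + ∫⁻ s in Aᶜ ∩ Ioi t, ENNReal.ofReal (wr s) :=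
          add_le_add_left hub _
      _ ≤ c * volume (Ioc 0 t \ A) + ∫⁻ s in Aᶜ ∩ Ioi t, ENNReal.ofReal (wr s) :=
          add_le_add_left (mul_le_mul_right hm2le _) _
      _ ≤ (∫⁻ s in Ioc 0 t \ A, ENNReal.ofReal (wr s))
          + ∫⁻ s in Aᶜ ∩ Ioi t, ENNReal.ofReal (wr s) := add_le_add_left hlb _
      _ = ∫⁻ s in (Ioc 0 t \ A) ∪ (Aᶜ ∩ Ioi t), ENNReal.ofReal (wr s) :=
          (lintegral_union (hA.compl.inter measurableSet_Ioi) hdisj2).symm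
      _ ≤ ∫⁻ s in Aᶜ, ENNReal.ofReal (wr s) := by
          refine lintegral_mono_set (union_subset ?_ inter_subset_left)
          exact fun s hs => hs.2
  · -- 𝔥(1+t) ≤ h_r(t), witness A = Iic t
    rw [hH]
    refine sInf_le ⟨Iic t, measurableSet_Iic, ?_, by rw [compl_Iic, hhr']⟩
    have h1 : (∫⁻ s in Iic (0:ℝ), ENNReal.ofReal (wc s)) = 1 := by
      rw [← ofReal_integral_eq_lintegral_ofReal hw.wc_int
        (Filter.Eventually.of_forall fun s => (hw.wc_pos s).le), hw.wc_total,
        ENNReal.ofReal_one]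
    have h2 : (∫⁻ s in Ioc (0:ℝ) t, ENNReal.ofReal (wc s)) = ENNReal.ofReal t := by
      rw [setLIntegral_congr_fun measurableSet_Ioc
        (fun s hs => ?_), setLIntegral_one, hvol]
      rw [hw.wc_one s hs.1, ENNReal.ofReal_one]
    have hsplit : Iic t = Iic (0:ℝ) ∪ Ioc 0 t := (Iic_union_Ioc_eq_Iic ht).symm
    rw [hsplit, lintegral_union measurableSet_Ioc (Iic_disjoint_Ioc le_rfl), h1, h2,
      ENNReal.ofReal_add zero_le_one ht, ENNReal.ofReal_one]
end

section
/- Let (w_c,w_r) be a pair of weights on ℝ satisfying condition (3.1). For a finite sequence x=(x_1,…,x_n) of complex numbers define N(x) = inf{ max_{1≤k≤n} ‖a_k‖_{L²(w_c)} + (Σ_{k=1}^n ‖b_k‖²_{L²(w_r)})^{1/2} }, the infimum being over all a_k ∈ L²(ℝ, w_c ds) and b_k ∈ L²(ℝ, w_r ds) with x_k = a_k(s)+b_k(s) for almost every s ∈ ℝ; and define ‖x‖' = inf{ max_{1≤k≤n} |x_k|·(∫_{A_k} w_c ds)^{1/2} + (Σ_{k=1}^n |x_k|²·∫_{ℝ∖A_k}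 w_r ds)^{1/2} }, the infimum being over all Lebesgue measurable sets A_1,…,A_n ⊆ ℝ. Then (1/2)·‖x‖' ≤ N(x) ≤ ‖x‖'. -/
open MeasureTheory Set
open scoped ENNReal

private lemma sq_rpow_half (a : ℝ≥0∞) : (a ^ 2) ^ (1/2 : ℝ) = a := by
  rw [← ENNReal.rpow_natCast a 2, ← ENNReal.rpow_mul]
  norm_num

private lemma four_rpow_half : ((4 : ℝ≥0∞)) ^ (1/2 : ℝ) = 2 := by
  have : (4 : ℝ≥0∞) = 2 ^ 2 := by norm_num
  rw [this, sq_rpow_half]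

private lemma mul_sq_rpow_half (c : ℝ≥0∞) (I : ℝ≥0∞) :
    (c ^ 2 * I) ^ (1/2 : ℝ) = c * I ^ (1/2 : ℝ) := by
  rw [ENNReal.mul_rpow_of_nonneg _ _ (by norm_num : (0:ℝ) ≤ 1/2), sq_rpow_half]

private lemma indicator_lintegral (B : Set ℝ) (hB : MeasurableSet B) (c : ℂ)
    (w : ℝ → ℝ≥0∞) (hwm : Measurable w) :
    (∫⁻ s, (‖B.indicator (fun _ => c) s‖₊ : ℝ≥0∞) ^ 2 * w s) =
      (‖c‖₊ : ℝ≥0∞) ^ 2 * ∫⁻ s in B, w s := by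
  rw [← lintegral_const_mul _ hwm, ← lintegral_indicator hB]
  congr 1
  funext s
  by_cases hs : s ∈ B <;>
    simp [Set.indicator_of_mem, Set.indicator_of_notMem, hs]

/-- The two-sided comparison from the proof of Lemma 3.4 between the
decomposition functional
`N(x) = inf{ sup_k ‖a_k‖_{L²(w_c)} + (Σ_k ‖b_k‖²_{L²(w_r)})^{1/2} : x_k = a_k + b_k a.e. }`
and the set-decomposition functional
`‖x‖' = inf{ sup_k |x_k| (∫_{A_k} w_c)^{1/2} + (Σ_k |x_k|² ∫_{ℝ∖A_k} w_r)^{1/2} }`: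
one has `(1/2)·‖x‖' ≤ N(x) ≤ ‖x‖'` (stated in `[0,∞]`). -/
theorem stmt_9 (wc wr : ℝ → ℝ) (hw : Weight31 wc wr)
    (n : ℕ) (x : Fin n → ℂ) (N N' : ℝ≥0∞)
    (hN : N = sInf {v : ℝ≥0∞ | ∃ a b : Fin n → ℝ → ℂ,
        (∀ k, Measurable (a k)) ∧ (∀ k, Measurable (b k)) ∧
        (∀ k, ∀ᵐ s ∂(volume : Measure ℝ), x k = a k s + b k s) ∧
        v = (⨆ k, (∫⁻ s, (‖a k s‖₊ : ℝ≥0∞) ^ 2 * ENNReal.ofReal (wc s)) ^ (1/2 : ℝ))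
          + (∑ k, ∫⁻ s, (‖b k s‖₊ : ℝ≥0∞) ^ 2 * ENNReal.ofReal (wr s)) ^ (1/2 : ℝ)})
    (hN' : N' = sInf {v : ℝ≥0∞ | ∃ A : Fin n → Set ℝ,
        (∀ k, MeasurableSet (A k)) ∧
        v = (⨆ k, (‖x k‖₊ : ℝ≥0∞) * (∫⁻ s in A k, ENNReal.ofReal (wc s)) ^ (1/2 : ℝ))
          + (∑ k, (‖x k‖₊ : ℝ≥0∞) ^ 2 * ∫⁻ s in (A k)ᶜ, ENNReal.ofReal (wr s)) ^ (1/2 : ℝ)}) :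
    N' ≤ 2 * N ∧ N ≤ N' := by
  have hwc_meas : Measurable fun s => ENNReal.ofReal (wc s) :=
    ENNReal.measurable_ofReal.comp hw.wc_mono.measurable
  have hwr_meas : Measurable fun s => ENNReal.ofReal (wr s) :=
    ENNReal.measurable_ofReal.comp hw.wr_anti.measurable
  constructor
  · -- N' ≤ 2 * N
    rw [hN, hN']
    have main : ∀ v ∈ {v : ℝ≥0∞ | ∃ a b : Fin n → ℝ → ℂ,
        (∀ k, Measurable (a k)) ∧ (∀ k, Measurable (b k)) ∧
        (∀ k, ∀ᵐ s ∂(volume : Measure ℝ), x k = a k s + b k s) ∧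
        v = (⨆ k, (∫⁻ s, (‖a k s‖₊ : ℝ≥0∞) ^ 2 * ENNReal.ofReal (wc s)) ^ (1/2 : ℝ))
          + (∑ k, ∫⁻ s, (‖b k s‖₊ : ℝ≥0∞) ^ 2 * ENNReal.ofReal (wr s)) ^ (1/2 : ℝ)},
        sInf {v : ℝ≥0∞ | ∃ A : Fin n → Set ℝ,
        (∀ k, MeasurableSet (A k)) ∧
        v = (⨆ k, (‖x k‖₊ : ℝ≥0∞) * (∫⁻ s in A k, ENNReal.ofReal (wc s)) ^ (1/2 : ℝ))
          + (∑ k, (‖x k‖₊ : ℝ≥0∞) ^ 2 * ∫⁻ s in (A k)ᶜ, ENNReal.ofReal (wr s)) ^ (1/2 : ℝ)}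
          ≤ 2 * v := by
      rintro v ⟨a, b, ha, hb, hab, rfl⟩
      set A : Fin n → Set ℝ := fun k => {s | ‖x k‖ ≤ 2 * ‖a k s‖} with hAdef
      have hA : ∀ k, MeasurableSet (A k) := fun k =>
        measurableSet_le measurable_const ((ha k).norm.const_mul 2)
      refine le_trans (sInf_le ⟨A, hA, rfl⟩) ?_
      -- bound the sup term
      have h1 : (⨆ k, (‖x k‖₊ : ℝ≥0∞) * (∫⁻ s in A k, ENNReal.ofReal (wc s)) ^ (1/2 : ℝ))
          ≤ 2 * ⨆ k, (∫⁻ s, (‖a k s‖₊ : ℝ≥0∞) ^ 2 * ENNReal.ofReal (wc s)) ^ (1/2 : ℝ) := by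
        refine iSup_le fun k => ?_
        have step : (‖x k‖₊ : ℝ≥0∞) ^ 2 * ∫⁻ s in A k, ENNReal.ofReal (wc s)
            ≤ 4 * ∫⁻ s, (‖a k s‖₊ : ℝ≥0∞) ^ 2 * ENNReal.ofReal (wc s) := by
          rw [← lintegral_const_mul _ hwc_meas]
          calc ∫⁻ s in A k, (‖x k‖₊ : ℝ≥0∞) ^ 2 * ENNReal.ofReal (wc s)
              ≤ ∫⁻ s in A k, 4 * ((‖a k s‖₊ : ℝ≥0∞) ^ 2 * ENNReal.ofReal (wc s)) := by
                refine lintegral_mono_ae ?_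
                filter_upwards [ae_restrict_mem (hA k)] with s hs
                have hsr : ‖x k‖ ≤ 2 * ‖a k s‖ := hs
                have hsn : (‖x k‖₊ : ℝ≥0∞) ≤ 2 * (‖a k s‖₊ : ℝ≥0∞) := by
                  have : ‖x k‖₊ ≤ 2 * ‖a k s‖₊ := by
                    rw [← NNReal.coe_le_coe]; push_cast; simpa using hsr
                  exact_mod_cast ENNReal.coe_le_coe.mpr this
                calc (‖x k‖₊ : ℝ≥0∞) ^ 2 * ENNReal.ofReal (wc s)
                    ≤ (2 * (‖a k s‖₊ : ℝ≥0∞)) ^ 2 * ENNReal.ofReal (wc s) := by gcongr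
                  _ = 4 * ((‖a k s‖₊ : ℝ≥0∞) ^ 2 * ENNReal.ofReal (wc s)) := by ring
            _ = 4 * ∫⁻ s in A k, (‖a k s‖₊ : ℝ≥0∞) ^ 2 * ENNReal.ofReal (wc s) := by
                rw [lintegral_const_mul' _ _ (by norm_num)]
            _ ≤ 4 * ∫⁻ s, (‖a k s‖₊ : ℝ≥0∞) ^ 2 * ENNReal.ofReal (wc s) := by
                gcongr
                exact Measure.restrict_le_self
        calc (‖x k‖₊ : ℝ≥0∞) * (∫⁻ s in A k, ENNReal.ofReal (wc s)) ^ (1/2 : ℝ)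
            = ((‖x k‖₊ : ℝ≥0∞) ^ 2 * ∫⁻ s in A k, ENNReal.ofReal (wc s)) ^ (1/2 : ℝ) := by
              rw [mul_sq_rpow_half]
          _ ≤ (4 * ∫⁻ s, (‖a k s‖₊ : ℝ≥0∞) ^ 2 * ENNReal.ofReal (wc s)) ^ (1/2 : ℝ) :=
              ENNReal.rpow_le_rpow step (by norm_num)
          _ = 2 * (∫⁻ s, (‖a k s‖₊ : ℝ≥0∞) ^ 2 * ENNReal.ofReal (wc s)) ^ (1/2 : ℝ) := by
              rw [ENNReal.mul_rpow_of_nonneg _ _ (by norm_num : (0:ℝ) ≤ 1/2), four_rpow_half]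
          _ ≤ 2 * ⨆ j, (∫⁻ s, (‖a j s‖₊ : ℝ≥0∞) ^ 2 * ENNReal.ofReal (wc s)) ^ (1/2 : ℝ) := by
              gcongr
              exact le_iSup (fun j => (∫⁻ s, (‖a j s‖₊ : ℝ≥0∞) ^ 2 * ENNReal.ofReal (wc s)) ^ (1/2 : ℝ)) k
      -- bound the sum term
      have h2 : (∑ k, (‖x k‖₊ : ℝ≥0∞) ^ 2 * ∫⁻ s in (A k)ᶜ, ENNReal.ofReal (wr s)) ^ (1/2 : ℝ)
          ≤ 2 * (∑ k, ∫⁻ s, (‖b k s‖₊ : ℝ≥0∞) ^ 2 * ENNReal.ofReal (wr s)) ^ (1/2 : ℝ) := by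
        have step : ∀ k, (‖x k‖₊ : ℝ≥0∞) ^ 2 * ∫⁻ s in (A k)ᶜ, ENNReal.ofReal (wr s)
            ≤ 4 * ∫⁻ s, (‖b k s‖₊ : ℝ≥0∞) ^ 2 * ENNReal.ofReal (wr s) := by
          intro k
          rw [← lintegral_const_mul _ hwr_meas]
          calc ∫⁻ s in (A k)ᶜ, (‖x k‖₊ : ℝ≥0∞) ^ 2 * ENNReal.ofReal (wr s)
              ≤ ∫⁻ s in (A k)ᶜ, 4 * ((‖b k s‖₊ : ℝ≥0∞) ^ 2 * ENNReal.ofReal (wr s)) := by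
                refine lintegral_mono_ae ?_
                filter_upwards [ae_restrict_mem (hA k).compl,
                  ae_restrict_of_ae (hab k)] with s hs hx
                have hsr : ¬(‖x k‖ ≤ 2 * ‖a k s‖) := hs
                have hbb : ‖x k‖ ≤ 2 * ‖b k s‖ := by
                  have htr : ‖x k‖ ≤ ‖a k s‖ + ‖b k s‖ := by
                    rw [hx]; exact norm_add_le _ _
                  push_neg at hsr
                  linarith
                have hsn : (‖x k‖₊ : ℝ≥0∞) ≤ 2 * (‖b k s‖₊ : ℝ≥0∞) := by
                  have : ‖x k‖₊ ≤ 2 * ‖b k s‖₊ := by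
                    rw [← NNReal.coe_le_coe]; push_cast; simpa using hbb
                  exact_mod_cast ENNReal.coe_le_coe.mpr this
                calc (‖x k‖₊ : ℝ≥0∞) ^ 2 * ENNReal.ofReal (wr s)
                    ≤ (2 * (‖b k s‖₊ : ℝ≥0∞)) ^ 2 * ENNReal.ofReal (wr s) := by gcongr
                  _ = 4 * ((‖b k s‖₊ : ℝ≥0∞) ^ 2 * ENNReal.ofReal (wr s)) := by ring
            _ = 4 * ∫⁻ s in (A k)ᶜ, (‖b k s‖₊ : ℝ≥0∞) ^ 2 * ENNReal.ofReal (wr s) := by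
                rw [lintegral_const_mul' _ _ (by norm_num)]
            _ ≤ 4 * ∫⁻ s, (‖b k s‖₊ : ℝ≥0∞) ^ 2 * ENNReal.ofReal (wr s) := by
                gcongr
                exact Measure.restrict_le_self
        calc (∑ k, (‖x k‖₊ : ℝ≥0∞) ^ 2 * ∫⁻ s in (A k)ᶜ, ENNReal.ofReal (wr s)) ^ (1/2 : ℝ)
            ≤ (∑ k, 4 * ∫⁻ s, (‖b k s‖₊ : ℝ≥0∞) ^ 2 * ENNReal.ofReal (wr s)) ^ (1/2 : ℝ) := by
              refine ENNReal.rpow_le_rpow (Finset.sum_le_sum fun k _ => step k) (by norm_num)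
          _ = (4 * ∑ k, ∫⁻ s, (‖b k s‖₊ : ℝ≥0∞) ^ 2 * ENNReal.ofReal (wr s)) ^ (1/2 : ℝ) := by
              rw [Finset.mul_sum]
          _ = 2 * (∑ k, ∫⁻ s, (‖b k s‖₊ : ℝ≥0∞) ^ 2 * ENNReal.ofReal (wr s)) ^ (1/2 : ℝ) := by
              rw [ENNReal.mul_rpow_of_nonneg _ _ (by norm_num : (0:ℝ) ≤ 1/2), four_rpow_half]
      calc _ ≤ (2 * ⨆ k, (∫⁻ s, (‖a k s‖₊ : ℝ≥0∞) ^ 2 * ENNReal.ofReal (wc s)) ^ (1/2 : ℝ))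
            + 2 * (∑ k, ∫⁻ s, (‖b k s‖₊ : ℝ≥0∞) ^ 2 * ENNReal.ofReal (wr s)) ^ (1/2 : ℝ) :=
            add_le_add h1 h2
        _ = _ := by rw [mul_add]
    have h2ne : (2 : ℝ≥0∞) ≠ 0 := by norm_num
    have h2top : (2 : ℝ≥0∞) ≠ ⊤ := by norm_num
    set S := {v : ℝ≥0∞ | ∃ a b : Fin n → ℝ → ℂ,
        (∀ k, Measurable (a k)) ∧ (∀ k, Measurable (b k)) ∧
        (∀ k, ∀ᵐ s ∂(volume : Measure ℝ), x k = a k s + b k s) ∧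
        v = (⨆ k, (∫⁻ s, (‖a k s‖₊ : ℝ≥0∞) ^ 2 * ENNReal.ofReal (wc s)) ^ (1/2 : ℝ))
          + (∑ k, ∫⁻ s, (‖b k s‖₊ : ℝ≥0∞) ^ 2 * ENNReal.ofReal (wr s)) ^ (1/2 : ℝ)} with hS
    set T := {v : ℝ≥0∞ | ∃ A : Fin n → Set ℝ,
        (∀ k, MeasurableSet (A k)) ∧
        v = (⨆ k, (‖x k‖₊ : ℝ≥0∞) * (∫⁻ s in A k, ENNReal.ofReal (wc s)) ^ (1/2 : ℝ))
          + (∑ k, (‖x k‖₊ : ℝ≥0∞) ^ 2 * ∫⁻ s in (A k)ᶜ, ENNReal.ofReal (wr s)) ^ (1/2 : ℝ)} with hT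
    have hdiv : sInf T / 2 ≤ sInf S := by
      refine le_sInf fun v hv => ?_
      rw [ENNReal.div_le_iff_le_mul (Or.inl h2ne) (Or.inl h2top), mul_comm]
      exact main v hv
    have := (ENNReal.div_le_iff_le_mul (Or.inl h2ne) (Or.inl h2top)).mp hdiv
    rwa [mul_comm] at this
  · -- N ≤ N'
    rw [hN, hN']
    refine le_sInf ?_
    rintro v ⟨A, hA, rfl⟩
    refine sInf_le ⟨fun k => (A k).indicator fun _ => x k,
      fun k => ((A k)ᶜ).indicator fun _ => x k,
      fun k => measurable_const.indicator (hA k),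
      fun k => measurable_const.indicator (hA k).compl, ?_, ?_⟩
    · intro k
      filter_upwards with s
      by_cases hs : s ∈ A k <;>
        simp [Set.indicator_of_mem, Set.indicator_of_notMem, hs]
    · congr 1
      · refine iSup_congr fun k => ?_
        rw [indicator_lintegral _ (hA k) _ _ hwc_meas, mul_sq_rpow_half]
      · congr 1
        refine Finset.sum_congr rfl fun k _ => ?_
        rw [indicator_lintegral _ (hA k).compl _ _ hwr_meas]
end

section
/- Let (w_c,w_r) be a pair of weights on ℝ satisfying condition (3.1), and let ϕ(0)=0, ϕ(t)=t²·𝔥(1/t²) ∈ [0,∞] for t>0. For a finite sequence x=(x_1,…,x_n) of complex numbers define its Luxemburg gauge ‖x‖_ϕ = inf{λ>0 : Σ_{k=1}^n ϕ(|x_k|/λ) ≤ 1}, and define ‖x‖' = inf{ max_{1≤k≤n} |x_k|·(∫_{A_k} w_c ds)^{1/2} + (Σ_{k=1}^n |x_k|²·∫_{ℝ∖A_k} w_r ds)^{1/2} }, the infimum being over all Lebesgue measurable sets A_1,…,A_n ⊆ ℝ. Then ‖x‖_ϕ ≤ ‖x‖' ≤ 2‖x‖_ϕ. -/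
open MeasureTheory Set
open scoped ENNReal NNReal

/-- The equivalence from the proof of Lemma 3.4 between the set-decomposition
functional `‖x‖'` and the Luxemburg gauge of `ϕ(t) = t²·𝔥(1/t²)`, where
`𝔥(t) = inf{∫_{ℝ∖A} w_r : ∫_A w_c ≤ t}`: one has `‖x‖_ϕ ≤ ‖x‖' ≤ 2‖x‖_ϕ`. -/
theorem stmt_10 (wc wr : ℝ → ℝ) (hw : Weight31 wc wr)
    (H : ℝ → ℝ≥0∞)
    (hH : ∀ t : ℝ, H t = sInf {x : ℝ≥0∞ | ∃ A : Set ℝ, MeasurableSet A ∧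
        (∫⁻ s in A, ENNReal.ofReal (wc s)) ≤ ENNReal.ofReal t ∧
        x = ∫⁻ s in Aᶜ, ENNReal.ofReal (wr s)})
    (φ : ℝ → ℝ≥0∞) (hφ0 : φ 0 = 0)
    (hφ : ∀ t : ℝ, 0 < t → φ t = ENNReal.ofReal (t ^ 2) * H (1 / t ^ 2))
    (n : ℕ) (x : Fin n → ℂ)
    (gauge : ℝ)
    (hgauge : gauge = sInf {lam : ℝ | 0 < lam ∧ (∑ k, φ (‖x k‖ / lam)) ≤ 1})
    (N' : ℝ≥0∞)
    (hN' : N' = sInf {v : ℝ≥0∞ | ∃ A : Fin n → Set ℝ,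
        (∀ k, MeasurableSet (A k)) ∧
        v = (⨆ k, (‖x k‖₊ : ℝ≥0∞) * (∫⁻ s in A k, ENNReal.ofReal (wc s)) ^ (1/2 : ℝ))
          + (∑ k, (‖x k‖₊ : ℝ≥0∞) ^ 2 * ∫⁻ s in (A k)ᶜ, ENNReal.ofReal (wr s)) ^ (1/2 : ℝ)}) :
    ENNReal.ofReal gauge ≤ N' ∧ N' ≤ ENNReal.ofReal (2 * gauge) := by
  -- basic facts
  have hpow : ∀ a : ℝ≥0∞, (a ^ (1/2:ℝ)) ^ (2:ℕ) = a := by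
    intro a
    rw [← ENNReal.rpow_natCast (a ^ (1/2:ℝ)) 2, ← ENNReal.rpow_mul]
    norm_num
  have hrsqrt : ∀ a : ℝ, 0 ≤ a → ((a^2 : ℝ))^(1/2:ℝ) = a := by
    intro a ha
    rw [← Real.rpow_natCast a 2, ← Real.rpow_mul ha]
    norm_num
  have hwcI : (∫⁻ s in Iic (0:ℝ), ENNReal.ofReal (wc s)) = 1 := by
    rw [← ofReal_integral_eq_lintegral_ofReal hw.wc_int
      (ae_of_all _ fun s => (hw.wc_pos s).le), hw.wc_total, ENNReal.ofReal_one]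
  have hwrI : (∫⁻ s in (Iic (0:ℝ))ᶜ, ENNReal.ofReal (wr s)) = 1 := by
    rw [compl_Iic, setLIntegral_congr (Ioi_ae_eq_Ici (a := (0:ℝ))),
      ← ofReal_integral_eq_lintegral_ofReal hw.wr_int
      (ae_of_all _ fun s => (hw.wr_pos s).le), hw.wr_total, ENNReal.ofReal_one]
  have hHle : ∀ (t : ℝ) (A : Set ℝ), MeasurableSet A →
      (∫⁻ s in A, ENNReal.ofReal (wc s)) ≤ ENNReal.ofReal t →
      H t ≤ ∫⁻ s in Aᶜ, ENNReal.ofReal (wr s) := by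
    intro t A hA h
    rw [hH]
    exact sInf_le ⟨A, hA, h, rfl⟩
  have hH1 : ∀ t : ℝ, 1 ≤ t → H t ≤ 1 := by
    intro t ht
    have := hHle t (Iic 0) measurableSet_Iic
      (by rw [hwcI]; exact ENNReal.one_le_ofReal.mpr ht)
    rwa [hwrI] at this
  have hφ_le : ∀ t : ℝ, 0 ≤ t → t ≤ 1 → φ t ≤ ENNReal.ofReal (t^2) := by
    intro t h0 h1
    rcases h0.eq_or_lt with rfl | ht
    · simp [hφ0]
    · rw [hφ t ht]
      have h2 : H (1/t^2) ≤ 1 := hH1 _ (one_le_one_div (by positivity) (pow_le_one₀ h0 h1))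
      calc ENNReal.ofReal (t^2) * H (1/t^2) ≤ ENNReal.ofReal (t^2) * 1 :=
            mul_le_mul_right h2 _
        _ = ENNReal.ofReal (t^2) := mul_one _
  set Sg : Set ℝ := {lam : ℝ | 0 < lam ∧ (∑ k, φ (‖x k‖ / lam)) ≤ 1} with hSg
  have hSg_ne : Sg.Nonempty := by
    refine ⟨1 + ∑ k, ‖x k‖, ?_, ?_⟩
    · have : (0:ℝ) ≤ ∑ k, ‖x k‖ := Finset.sum_nonneg fun k _ => norm_nonneg _
      positivity
    · set lam0 : ℝ := 1 + ∑ k, ‖x k‖ with hlam0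
      have hsum_nonneg : (0:ℝ) ≤ ∑ k, ‖x k‖ := Finset.sum_nonneg fun k _ => norm_nonneg _
      have hlam0p : (0:ℝ) < lam0 := by positivity
      have hterm : ∀ k, φ (‖x k‖ / lam0) ≤ ENNReal.ofReal ((‖x k‖ / lam0)^2) := by
        intro k
        refine hφ_le _ (by positivity) ?_
        rw [div_le_one hlam0p]
        calc ‖x k‖ ≤ ∑ j, ‖x j‖ :=
              Finset.single_le_sum (fun j _ => norm_nonneg _) (Finset.mem_univ k)
          _ ≤ lam0 := by rw [hlam0]; linarith
      calc ∑ k, φ (‖x k‖ / lam0) ≤ ∑ k, ENNReal.ofReal ((‖x k‖ / lam0)^2) :=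
            Finset.sum_le_sum fun k _ => hterm k
        _ = ENNReal.ofReal (∑ k, (‖x k‖ / lam0)^2) :=
            (ENNReal.ofReal_sum_of_nonneg fun k _ => by positivity).symm
        _ ≤ 1 := by
            rw [← ENNReal.ofReal_one]
            apply ENNReal.ofReal_le_ofReal
            calc ∑ k, (‖x k‖ / lam0)^2 ≤ (∑ k, ‖x k‖ / lam0)^2 :=
                  Finset.sum_sq_le_sq_sum_of_nonneg (fun k _ => by positivity)
              _ ≤ 1 := by
                  apply pow_le_one₀ (by positivity)
                  rw [← Finset.sum_div, div_le_one hlam0p]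
                  linarith
  have hbdd : BddBelow Sg := ⟨0, fun lam h => h.1.le⟩
  have hg_nonneg : 0 ≤ gauge := by
    rw [hgauge]; exact Real.sInf_nonneg fun lam h => h.1.le
  have partA : ENNReal.ofReal gauge ≤ N' := by
    rw [hN']
    refine le_sInf ?_
    rintro v ⟨A, hA, rfl⟩
    set M := ⨆ k, (‖x k‖₊ : ℝ≥0∞) * (∫⁻ s in A k, ENNReal.ofReal (wc s)) ^ (1/2 : ℝ) with hMdef
    set S := ∑ k, (‖x k‖₊ : ℝ≥0∞) ^ 2 * ∫⁻ s in (A k)ᶜ, ENNReal.ofReal (wr s) with hSdef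
    by_cases hv : M + S ^ (1/2:ℝ) = ⊤
    · rw [hv]; exact le_top
    have hkey : ∀ lam : ℝ, 0 < lam → M + S ^ (1/2:ℝ) ≤ ENNReal.ofReal lam → lam ∈ Sg := by
      intro lam hlam hle
      refine ⟨hlam, ?_⟩
      have hMk : ∀ k, (‖x k‖₊ : ℝ≥0∞) * (∫⁻ s in A k, ENNReal.ofReal (wc s)) ^ (1/2:ℝ)
          ≤ ENNReal.ofReal lam := by
        intro k
        calc (‖x k‖₊ : ℝ≥0∞) * (∫⁻ s in A k, ENNReal.ofReal (wc s)) ^ (1/2:ℝ)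
            ≤ M := by
              rw [hMdef]
              exact le_iSup (fun j => (‖x j‖₊ : ℝ≥0∞) * (∫⁻ s in A j, ENNReal.ofReal (wc s)) ^ (1/2:ℝ)) k
          _ ≤ M + S ^ (1/2:ℝ) := le_self_add
          _ ≤ ENNReal.ofReal lam := hle
      have hSle : S ≤ ENNReal.ofReal lam ^ (2:ℕ) := by
        have h1 : S ^ (1/2:ℝ) ≤ ENNReal.ofReal lam := le_trans le_add_self hle
        calc S = (S ^ (1/2:ℝ)) ^ (2:ℕ) := (hpow S).symm
          _ ≤ ENNReal.ofReal lam ^ (2:ℕ) := pow_le_pow_left' h1 2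
      have hterm : ∀ k, φ (‖x k‖ / lam) ≤
          ((‖x k‖₊ : ℝ≥0∞) ^ 2 * ∫⁻ s in (A k)ᶜ, ENNReal.ofReal (wr s))
            * (ENNReal.ofReal lam ^ (2:ℕ))⁻¹ := by
        intro k
        by_cases hxk : x k = 0
        · simp [hxk, hφ0]
        · have hnorm : 0 < ‖x k‖ := norm_pos_iff.mpr hxk
          have hxp : ((‖x k‖₊ : ℝ≥0∞)) ^ (2:ℕ) = ENNReal.ofReal (‖x k‖^2) := by
            rw [← enorm_eq_nnnorm, ← ofReal_norm, ← ENNReal.ofReal_pow (norm_nonneg _)]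
          have hwc_le : (∫⁻ s in A k, ENNReal.ofReal (wc s))
              ≤ ENNReal.ofReal (lam^2 / ‖x k‖^2) := by
            have hne0 : ((‖x k‖₊ : ℝ≥0∞)) ≠ 0 :=
              ENNReal.coe_ne_zero.mpr (nnnorm_ne_zero_iff.mpr hxk)
            have h1 : (∫⁻ s in A k, ENNReal.ofReal (wc s)) ^ (1/2:ℝ)
                ≤ ENNReal.ofReal lam / (‖x k‖₊ : ℝ≥0∞) := by
              refine (ENNReal.le_div_iff_mul_le (Or.inl hne0) (Or.inl ENNReal.coe_ne_top)).mpr ?_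
              rw [mul_comm]; exact hMk k
            calc (∫⁻ s in A k, ENNReal.ofReal (wc s))
                = ((∫⁻ s in A k, ENNReal.ofReal (wc s)) ^ (1/2:ℝ)) ^ (2:ℕ) := (hpow _).symm
              _ ≤ (ENNReal.ofReal lam / (‖x k‖₊ : ℝ≥0∞)) ^ (2:ℕ) := pow_le_pow_left' h1 2
              _ = ENNReal.ofReal (lam^2 / ‖x k‖^2) := by
                  rw [div_eq_mul_inv, mul_pow, ← ENNReal.inv_pow, hxp,
                    ← ENNReal.ofReal_pow hlam.le, ← ENNReal.ofReal_inv_of_pos (by positivity),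
                    ← ENNReal.ofReal_mul (by positivity), ← div_eq_mul_inv]
          have hHk : H (lam^2 / ‖x k‖^2) ≤ ∫⁻ s in (A k)ᶜ, ENNReal.ofReal (wr s) :=
            hHle _ _ (hA k) hwc_le
          have harg : 1/(‖x k‖ / lam)^2 = lam^2 / ‖x k‖^2 := by
            rw [div_pow, one_div, inv_div]
          have hcoef : ENNReal.ofReal ((‖x k‖ / lam)^2)
              = (‖x k‖₊ : ℝ≥0∞) ^ (2:ℕ) * (ENNReal.ofReal lam ^ (2:ℕ))⁻¹ := by
            rw [div_pow, div_eq_mul_inv, ENNReal.ofReal_mul (by positivity),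
              ENNReal.ofReal_inv_of_pos (by positivity), hxp,
              ENNReal.ofReal_pow hlam.le]
          rw [hφ _ (div_pos hnorm hlam), harg, hcoef]
          calc (‖x k‖₊ : ℝ≥0∞) ^ (2:ℕ) * (ENNReal.ofReal lam ^ (2:ℕ))⁻¹ * H (lam^2 / ‖x k‖^2)
              = ((‖x k‖₊ : ℝ≥0∞) ^ (2:ℕ) * H (lam^2 / ‖x k‖^2))
                  * (ENNReal.ofReal lam ^ (2:ℕ))⁻¹ := by ring
            _ ≤ ((‖x k‖₊ : ℝ≥0∞) ^ (2:ℕ) * ∫⁻ s in (A k)ᶜ, ENNReal.ofReal (wr s))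
                  * (ENNReal.ofReal lam ^ (2:ℕ))⁻¹ :=
                mul_le_mul_left (mul_le_mul_right hHk _) _
      calc ∑ k, φ (‖x k‖ / lam)
          ≤ ∑ k, ((‖x k‖₊ : ℝ≥0∞) ^ 2 * ∫⁻ s in (A k)ᶜ, ENNReal.ofReal (wr s))
              * (ENNReal.ofReal lam ^ (2:ℕ))⁻¹ := Finset.sum_le_sum fun k _ => hterm k
        _ = S * (ENNReal.ofReal lam ^ (2:ℕ))⁻¹ := by rw [hSdef, Finset.sum_mul]
        _ ≤ ENNReal.ofReal lam ^ (2:ℕ) * (ENNReal.ofReal lam ^ (2:ℕ))⁻¹ :=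
            mul_le_mul_left hSle _
        _ = 1 := ENNReal.mul_inv_cancel
            (pow_ne_zero 2 (ENNReal.ofReal_pos.mpr hlam).ne')
            (ENNReal.pow_ne_top ENNReal.ofReal_ne_top)
    have htR : gauge ≤ (M + S ^ (1/2:ℝ)).toReal := by
      refine le_of_forall_pos_le_add ?_
      intro δ hδ
      have hlam : 0 < (M + S ^ (1/2:ℝ)).toReal + δ := by
        have := ENNReal.toReal_nonneg (a := M + S ^ (1/2:ℝ)); linarith
      rw [hgauge]
      refine csInf_le hbdd (hkey _ hlam ?_)
      calc M + S ^ (1/2:ℝ) = ENNReal.ofReal ((M + S ^ (1/2:ℝ)).toReal) :=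
            (ENNReal.ofReal_toReal hv).symm
        _ ≤ ENNReal.ofReal ((M + S ^ (1/2:ℝ)).toReal + δ) :=
            ENNReal.ofReal_le_ofReal (le_add_of_nonneg_right hδ.le)
    calc ENNReal.ofReal gauge ≤ ENNReal.ofReal ((M + S ^ (1/2:ℝ)).toReal) :=
          ENNReal.ofReal_le_ofReal htR
      _ = M + S ^ (1/2:ℝ) := ENNReal.ofReal_toReal hv
  
  refine ⟨partA, ?_⟩
  have key : ∀ lam ∈ Sg, ∀ δ : ℝ, 0 < δ →
      N' ≤ ENNReal.ofReal (2*lam) + ENNReal.ofReal δ := by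
    rintro lam ⟨hlam, hsum⟩ δ hδ
    by_cases hn : n = 0
    · subst hn
      rw [hN']
      refine le_trans (sInf_le (a := 0) ⟨fun _ => ∅, fun k => k.elim0, ?_⟩) zero_le
      rw [iSup_of_empty, Finset.univ_eq_empty, Finset.sum_empty,
        ENNReal.zero_rpow_of_pos (by norm_num)]
      simp
    · have hnn0 : ((n:ℝ≥0∞)) ≠ 0 := Nat.cast_ne_zero.mpr hn
      have hnnt : ((n:ℝ≥0∞)) ≠ ⊤ := ENNReal.natCast_ne_top n
      have hex : ∀ k, ∃ B : Set ℝ, MeasurableSet B ∧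
          (∫⁻ s in B, ENNReal.ofReal (wc s)) ≤ ENNReal.ofReal (lam^2 / ‖x k‖^2) ∧
          (‖x k‖₊ : ℝ≥0∞)^2 * (∫⁻ s in Bᶜ, ENNReal.ofReal (wr s))
            ≤ ENNReal.ofReal (lam^2) * φ (‖x k‖ / lam) + ENNReal.ofReal (δ^2) / n := by
        intro k
        by_cases hxk : x k = 0
        · exact ⟨∅, MeasurableSet.empty, by simp, by simp [hxk]⟩
        · have hnorm : 0 < ‖x k‖ := norm_pos_iff.mpr hxk
          have ht : 0 < ‖x k‖ / lam := div_pos hnorm hlam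
          have harg : 1/(‖x k‖/lam)^2 = lam^2/‖x k‖^2 := by rw [div_pow, one_div, inv_div]
          have hφk : φ (‖x k‖/lam) ≤ 1 :=
            le_trans (Finset.single_le_sum (f := fun i => φ (‖x i‖ / lam))
              (fun i _ => zero_le) (Finset.mem_univ k)) hsum
          have hHlt : H (lam^2/‖x k‖^2) ≠ ⊤ := by
            intro htop
            have h5 := hφ _ ht
            rw [harg, htop, ENNReal.mul_top
              (ENNReal.ofReal_pos.mpr (by positivity)).ne'] at h5
            rw [h5] at hφk
            simp at hφk
          have ha0 : ((‖x k‖₊ : ℝ≥0∞))^2 ≠ 0 :=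
            pow_ne_zero _ (ENNReal.coe_ne_zero.mpr (nnnorm_ne_zero_iff.mpr hxk))
          have hat : ((‖x k‖₊ : ℝ≥0∞))^2 ≠ ⊤ := ENNReal.pow_ne_top ENNReal.coe_ne_top
          set ek : ℝ≥0∞ := (ENNReal.ofReal (δ^2) / n) * (((‖x k‖₊ : ℝ≥0∞))^2)⁻¹ with hek
          have hek0 : ek ≠ 0 := by
            rw [hek]
            exact mul_ne_zero (ENNReal.div_pos (ENNReal.ofReal_pos.mpr (by positivity)).ne' hnnt).ne'
              (ENNReal.inv_ne_zero.mpr hat)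
          have hlt : H (lam^2/‖x k‖^2) < H (lam^2/‖x k‖^2) + ek :=
            ENNReal.lt_add_right hHlt hek0
          obtain ⟨a, ⟨B, hB, hBwc, rfl⟩, haa⟩ :=
            sInf_lt_iff.mp (lt_of_eq_of_lt (hH (lam^2/‖x k‖^2)).symm hlt)
          refine ⟨B, hB, hBwc, ?_⟩
          have h1 : (‖x k‖₊ : ℝ≥0∞)^2 * (∫⁻ s in Bᶜ, ENNReal.ofReal (wr s))
              ≤ (‖x k‖₊ : ℝ≥0∞)^2 * (H (lam^2/‖x k‖^2) + ek) := mul_le_mul_right haa.le _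
          have h2 : (‖x k‖₊ : ℝ≥0∞)^2 * H (lam^2/‖x k‖^2)
              = ENNReal.ofReal (lam^2) * φ (‖x k‖/lam) := by
            rw [hφ _ ht, harg, ← mul_assoc, ← ENNReal.ofReal_mul (by positivity)]
            congr 1
            have h6 : lam^2 * (‖x k‖/lam)^2 = ‖x k‖^2 := by field_simp
            rw [h6, ENNReal.ofReal_pow (norm_nonneg _), ofReal_norm, enorm_eq_nnnorm]
          have h3 : (‖x k‖₊ : ℝ≥0∞)^2 * ek = ENNReal.ofReal (δ^2) / n := by
            rw [hek, mul_comm (ENNReal.ofReal (δ^2) / (n:ℝ≥0∞)), ← mul_assoc,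
              ENNReal.mul_inv_cancel ha0 hat, one_mul]
          rw [mul_add, h2, h3] at h1
          exact h1
      choose A hA hAwc hAwr using hex
      rw [hN']
      refine le_trans (sInf_le ⟨A, hA, rfl⟩) ?_
      have hsup : (⨆ k, (‖x k‖₊ : ℝ≥0∞) * (∫⁻ s in A k, ENNReal.ofReal (wc s)) ^ (1/2:ℝ))
          ≤ ENNReal.ofReal lam := by
        refine iSup_le fun k => ?_
        by_cases hxk : x k = 0
        · simp [hxk]
        · have hnorm : 0 < ‖x k‖ := norm_pos_iff.mpr hxk
          calc (‖x k‖₊ : ℝ≥0∞) * (∫⁻ s in A k, ENNReal.ofReal (wc s)) ^ (1/2:ℝ)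
              ≤ (‖x k‖₊ : ℝ≥0∞) * (ENNReal.ofReal (lam^2/‖x k‖^2)) ^ (1/2:ℝ) :=
                mul_le_mul_right (ENNReal.rpow_le_rpow (hAwc k) (by norm_num)) _
            _ = ENNReal.ofReal lam := by
                rw [ENNReal.ofReal_rpow_of_nonneg (by positivity) (by norm_num)]
                have h7 : (lam^2/‖x k‖^2 : ℝ) = (lam/‖x k‖)^2 := by rw [div_pow]
                rw [h7, hrsqrt _ (by positivity), ← enorm_eq_nnnorm, ← ofReal_norm,
                  ← ENNReal.ofReal_mul (norm_nonneg _)]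
                congr 1
                rw [mul_comm, div_mul_cancel₀ _ hnorm.ne']
      have hsum2 : (∑ k, (‖x k‖₊ : ℝ≥0∞)^2 * ∫⁻ s in (A k)ᶜ, ENNReal.ofReal (wr s))
          ≤ ENNReal.ofReal (lam^2) + ENNReal.ofReal (δ^2) := by
        calc (∑ k, (‖x k‖₊ : ℝ≥0∞)^2 * ∫⁻ s in (A k)ᶜ, ENNReal.ofReal (wr s))
            ≤ ∑ k, (ENNReal.ofReal (lam^2) * φ (‖x k‖/lam) + ENNReal.ofReal (δ^2) / n) :=
              Finset.sum_le_sum fun k _ => hAwr k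
          _ = ENNReal.ofReal (lam^2) * (∑ k, φ (‖x k‖/lam))
              + (n:ℝ≥0∞) * (ENNReal.ofReal (δ^2) / n) := by
              rw [Finset.sum_add_distrib, ← Finset.mul_sum, Finset.sum_const,
                Finset.card_univ, Fintype.card_fin, nsmul_eq_mul]
          _ ≤ ENNReal.ofReal (lam^2) * 1 + ENNReal.ofReal (δ^2) :=
              add_le_add (mul_le_mul_right hsum _)
                (le_of_eq (ENNReal.mul_div_cancel hnn0 hnnt))
          _ = ENNReal.ofReal (lam^2) + ENNReal.ofReal (δ^2) := by rw [mul_one]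
      calc (⨆ k, (‖x k‖₊ : ℝ≥0∞) * (∫⁻ s in A k, ENNReal.ofReal (wc s)) ^ (1/2:ℝ))
            + (∑ k, (‖x k‖₊ : ℝ≥0∞)^2 * ∫⁻ s in (A k)ᶜ, ENNReal.ofReal (wr s)) ^ (1/2:ℝ)
          ≤ ENNReal.ofReal lam + (ENNReal.ofReal (lam^2) + ENNReal.ofReal (δ^2)) ^ (1/2:ℝ) :=
            add_le_add hsup (ENNReal.rpow_le_rpow hsum2 (by norm_num))
        _ ≤ ENNReal.ofReal lam
            + (ENNReal.ofReal (lam^2) ^ (1/2:ℝ) + ENNReal.ofReal (δ^2) ^ (1/2:ℝ)) :=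
            add_le_add_right (ENNReal.rpow_add_le_add_rpow _ _ (by norm_num) (by norm_num)) _
        _ = ENNReal.ofReal (2*lam) + ENNReal.ofReal δ := by
            rw [ENNReal.ofReal_rpow_of_nonneg (sq_nonneg _) (by norm_num),
              ENNReal.ofReal_rpow_of_nonneg (sq_nonneg _) (by norm_num),
              hrsqrt lam hlam.le, hrsqrt δ hδ.le, ← add_assoc,
              ← ENNReal.ofReal_add hlam.le hlam.le, two_mul]
  have key2 : ∀ lam ∈ Sg, N' ≤ ENNReal.ofReal (2*lam) := by
    intro lam hl
    refine ENNReal.le_of_forall_pos_le_add fun ε hε _ => ?_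
    have h8 := key lam hl ε (by exact_mod_cast hε)
    rwa [ENNReal.ofReal_coe_nnreal] at h8
  refine ENNReal.le_of_forall_pos_le_add fun ε hε _ => ?_
  have hεR : (0:ℝ) < (ε:ℝ) := by exact_mod_cast hε
  obtain ⟨lam, hlamSg, hlt⟩ := Real.lt_sInf_add_pos hSg_ne (half_pos hεR)
  calc N' ≤ ENNReal.ofReal (2*lam) := key2 lam hlamSg
    _ ≤ ENNReal.ofReal (2*gauge + ε) := ENNReal.ofReal_le_ofReal (by rw [hgauge]; linarith)
    _ ≤ ENNReal.ofReal (2*gauge) + ENNReal.ofReal ε := ENNReal.ofReal_add_le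
    _ = ENNReal.ofReal (2*gauge) + ε := by rw [ENNReal.ofReal_coe_nnreal]
end

section
/- Let (Ω,ν) be a measure space, let u,v:Ω→(0,∞) be measurable, and let f:Ω→ℂ be measurable. Then, as an identity in [0,∞], inf{ ∫_Ω (|g|²·u + |h|²·v) dν : g,h measurable, f = g + h ν-almost everywhere } = ∫_Ω |f|²·(u·v)/(u+v) dν, and the infimum is attained at g = (v/(u+v))·f, h = (u/(u+v))·f. -/
open MeasureTheory Set
open scoped ENNReal

private lemma key_real_ineq (a b c u v : ℝ) (ha : 0 ≤ a) (hb : 0 ≤ b) (hc : 0 ≤ c)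
    (hcab : c ≤ a + b) (hu : 0 < u) (hv : 0 < v) :
    c ^ 2 * (u * v / (u + v)) ≤ a ^ 2 * u + b ^ 2 * v := by
  have huv : 0 < u + v := by linarith
  rw [mul_div_assoc', div_le_iff₀ huv]
  have h1 : c ^ 2 ≤ (a + b) ^ 2 := by nlinarith
  nlinarith [sq_nonneg (a * u - b * v),
    mul_le_mul_of_nonneg_right h1 (mul_pos hu hv).le]

private lemma nnnorm_sq_eq (x : ℂ) : (‖x‖₊ : ℝ≥0∞) ^ 2 = ENNReal.ofReal (‖x‖ ^ 2) := by
  rw [ENNReal.ofReal_pow (norm_nonneg x), ofReal_norm, enorm_eq_nnnorm]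

/-- The exact computation from Section 2, based on
`inf_{0≤t≤1}(t²u + (1−t)²v) = uv/(u+v)`: as an identity in `[0,∞]`,
`inf{∫(|g|²u + |h|²v) dν : f = g + h a.e.} = ∫ |f|²·uv/(u+v) dν`, and the
infimum is attained at `g = (v/(u+v))f`, `h = (u/(u+v))f`. -/
theorem stmt_13 {Ω : Type*} [MeasurableSpace Ω] (ν : Measure Ω)
    (u v : Ω → ℝ) (hu : Measurable u) (hv : Measurable v)
    (hu_pos : ∀ ω, 0 < u ω) (hv_pos : ∀ ω, 0 < v ω)
    (f : Ω → ℂ) (hf : Measurable f) :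
    sInf {x : ℝ≥0∞ | ∃ g h : Ω → ℂ, Measurable g ∧ Measurable h ∧
        (∀ᵐ ω ∂ν, f ω = g ω + h ω) ∧
        x = ∫⁻ ω, ((‖g ω‖₊ : ℝ≥0∞) ^ 2 * ENNReal.ofReal (u ω)
              + (‖h ω‖₊ : ℝ≥0∞) ^ 2 * ENNReal.ofReal (v ω)) ∂ν}
      = (∫⁻ ω, (‖f ω‖₊ : ℝ≥0∞) ^ 2
            * ENNReal.ofReal (u ω * v ω / (u ω + v ω)) ∂ν) ∧
    (∫⁻ ω, ((‖((v ω / (u ω + v ω) : ℝ) : ℂ) * f ω‖₊ : ℝ≥0∞) ^ 2 * ENNReal.ofReal (u ω)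
          + (‖((u ω / (u ω + v ω) : ℝ) : ℂ) * f ω‖₊ : ℝ≥0∞) ^ 2 * ENNReal.ofReal (v ω)) ∂ν)
      = (∫⁻ ω, (‖f ω‖₊ : ℝ≥0∞) ^ 2
            * ENNReal.ofReal (u ω * v ω / (u ω + v ω)) ∂ν) := by
  have huv : ∀ ω, 0 < u ω + v ω := fun ω => by have := hu_pos ω; have := hv_pos ω; linarith
  -- the attainment equality (second conjunct)
  have hatt : (∫⁻ ω, ((‖((v ω / (u ω + v ω) : ℝ) : ℂ) * f ω‖₊ : ℝ≥0∞) ^ 2 * ENNReal.ofReal (u ω)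
          + (‖((u ω / (u ω + v ω) : ℝ) : ℂ) * f ω‖₊ : ℝ≥0∞) ^ 2 * ENNReal.ofReal (v ω)) ∂ν)
      = (∫⁻ ω, (‖f ω‖₊ : ℝ≥0∞) ^ 2
            * ENNReal.ofReal (u ω * v ω / (u ω + v ω)) ∂ν) := by
    refine lintegral_congr fun ω => ?_
    have h1 : 0 ≤ v ω / (u ω + v ω) := div_nonneg (hv_pos ω).le (huv ω).le
    have h2 : 0 ≤ u ω / (u ω + v ω) := div_nonneg (hu_pos ω).le (huv ω).le
    rw [nnnorm_sq_eq, nnnorm_sq_eq, nnnorm_sq_eq,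
      ← ENNReal.ofReal_mul (sq_nonneg _), ← ENNReal.ofReal_mul (sq_nonneg _),
      ← ENNReal.ofReal_mul (sq_nonneg _),
      ← ENNReal.ofReal_add (mul_nonneg (sq_nonneg _) (hu_pos ω).le)
        (mul_nonneg (sq_nonneg _) (hv_pos ω).le)]
    congr 1
    rw [norm_mul, norm_mul, Complex.norm_real, Complex.norm_real,
      Real.norm_of_nonneg h1, Real.norm_of_nonneg h2]
    have := (huv ω).ne'
    field_simp
    ring
  refine ⟨le_antisymm ?_ ?_, hatt⟩
  · -- sInf ≤ RHS : membership of the attaining pair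
    rw [← hatt]
    refine sInf_le ?_
    refine ⟨fun ω => ((v ω / (u ω + v ω) : ℝ) : ℂ) * f ω,
      fun ω => ((u ω / (u ω + v ω) : ℝ) : ℂ) * f ω,
      (Complex.measurable_ofReal.comp ((hv.div (hu.add hv)))).mul hf,
      (Complex.measurable_ofReal.comp ((hu.div (hu.add hv)))).mul hf,
      Filter.Eventually.of_forall fun ω => ?_, rfl⟩
    rw [← add_mul, ← Complex.ofReal_add]
    have := (huv ω).ne'
    have : v ω / (u ω + v ω) + u ω / (u ω + v ω) = 1 := by field_simp; ring
    rw [this, Complex.ofReal_one, one_mul]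
  · -- RHS ≤ every element
    refine le_sInf ?_
    rintro x ⟨g, h, hg, hh, hae, rfl⟩
    refine lintegral_mono_ae (hae.mono fun ω hω => ?_)
    rw [nnnorm_sq_eq, nnnorm_sq_eq, nnnorm_sq_eq,
      ← ENNReal.ofReal_mul (sq_nonneg _), ← ENNReal.ofReal_mul (sq_nonneg _),
      ← ENNReal.ofReal_mul (sq_nonneg _),
      ← ENNReal.ofReal_add (mul_nonneg (sq_nonneg _) (hu_pos ω).le)
        (mul_nonneg (sq_nonneg _) (hv_pos ω).le)]
    refine ENNReal.ofReal_le_ofReal ?_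
    have hfle : ‖f ω‖ ≤ ‖g ω‖ + ‖h ω‖ := by rw [hω]; exact norm_add_le _ _
    exact key_real_ineq _ _ _ _ _ (norm_nonneg _) (norm_nonneg _) (norm_nonneg _) hfle
      (hu_pos ω) (hv_pos ω)
end

section
/- Let ψ:[0,∞)→[0,∞) be defined by ψ(0)=0 and ψ(t)=t²·log(t + 1/t) for t>0, and let ψ⁻¹(t)=sup{s ≥ 0 : ψ(s) ≤ t} be its generalized inverse. Then lim_{t→0⁺} ψ⁻¹(t)·(log(1/t))^{1/2}/(2t)^{1/2} = 1; consequently there exist constants c,C>0 such that c·(n·log(n+1))^{1/2} ≤ 1/ψ⁻¹(1/n) ≤ C·(n·log(n+1))^{1/2} for all integers n ≥ 1. -/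
open Set Filter Real

noncomputable def gOrl (s : ℝ) : ℝ := s ^ 2 * Real.log (s + 1 / s)

noncomputable def Lf (s : ℝ) : ℝ := Real.log (s + 1 / s)

lemma two_le_add_inv {s : ℝ} (hs : 0 < s) : 2 ≤ s + 1 / s := by
  have h : s * (1 / s) = 1 := by field_simp
  nlinarith [sq_nonneg (s - 1), hs]

lemma log2_le_Lf {s : ℝ} (hs : 0 < s) : Real.log 2 ≤ Lf s :=
  Real.log_le_log (by norm_num) (two_le_add_inv hs)

lemma Lf_pos {s : ℝ} (hs : 0 < s) : 0 < Lf s :=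
  lt_of_lt_of_le (Real.log_pos (by norm_num)) (log2_le_Lf hs)

lemma gOrl_pos {s : ℝ} (hs : 0 < s) : 0 < gOrl s :=
  mul_pos (by positivity) (Lf_pos hs)

lemma Lf_split {s : ℝ} (hs : 0 < s) : Lf s = Real.log (s ^ 2 + 1) - Real.log s := by
  have h : s + 1 / s = (s ^ 2 + 1) / s := by field_simp
  rw [Lf, h, Real.log_div (by positivity) hs.ne']

lemma gOrl_hasDerivAt {x : ℝ} (hx : 0 < x) :
    HasDerivAt gOrl
      (2 * x * Real.log (x + 1 / x) + x ^ 2 * ((1 + -(x ^ 2)⁻¹) / (x + 1 / x))) x := by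
  have hne : x ≠ 0 := hx.ne'
  have hden : (0:ℝ) < x + 1 / x := by positivity
  have hu : HasDerivAt (fun y : ℝ => y + 1 / y) (1 + -(x ^ 2)⁻¹) x := by
    simp only [one_div]; exact (hasDerivAt_id' x).add (hasDerivAt_inv hne)
  have hlog : HasDerivAt (fun y : ℝ => Real.log (y + 1 / y))
      ((1 + -(x ^ 2)⁻¹) / (x + 1 / x)) x := hu.log hden.ne'
  have hsq : HasDerivAt (fun y : ℝ => y ^ 2) (2 * x) x := by
    simpa using hasDerivAt_pow 2 x
  unfold gOrl
  exact hsq.mul hlog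

lemma gOrl_deriv_pos {x : ℝ} (hx : 0 < x) :
    0 < 2 * x * Real.log (x + 1 / x) + x ^ 2 * ((1 + -(x ^ 2)⁻¹) / (x + 1 / x)) := by
  have hden : (0:ℝ) < x + 1 / x := by positivity
  have hlog : Real.log 2 ≤ Real.log (x + 1 / x) :=
    Real.log_le_log (by norm_num) (two_le_add_inv hx)
  have hA : -x ≤ x ^ 2 * ((1 + -(x ^ 2)⁻¹) / (x + 1 / x)) := by
    rw [mul_div_assoc', le_div_iff₀ hden]
    have h1 : x ^ 2 * (1 + -(x ^ 2)⁻¹) = x ^ 2 - 1 := by field_simp; try ring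
    have h2 : -x * (x + 1 / x) = -x ^ 2 - 1 := by field_simp; try ring
    rw [h1, h2]; nlinarith
  have h3 : 2 * x * Real.log 2 ≤ 2 * x * Real.log (x + 1 / x) :=
    mul_le_mul_of_nonneg_left hlog (by linarith)
  nlinarith [Real.log_two_gt_d9]

lemma gOrl_contOn : ContinuousOn gOrl (Ioi (0:ℝ)) :=
  fun x hx => ((gOrl_hasDerivAt hx).continuousAt).continuousWithinAt

lemma gOrl_mono : StrictMonoOn gOrl (Ioi (0:ℝ)) := by
  apply strictMonoOn_of_deriv_pos (convex_Ioi 0) gOrl_contOn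
  intro x hx
  rw [interior_Ioi] at hx
  rw [(gOrl_hasDerivAt hx).deriv]
  exact gOrl_deriv_pos hx

lemma gOrl_surj {t : ℝ} (ht : 0 < t) : ∃ s : ℝ, 0 < s ∧ gOrl s = t := by
  set a : ℝ := min (t / 2) 1 with ha_def
  set b : ℝ := 2 * Real.sqrt t + 2 with hb_def
  have ha0 : 0 < a := lt_min (by linarith) one_pos
  have ha1 : a ≤ 1 := min_le_right _ _
  have hat : a ≤ t / 2 := min_le_left _ _
  have hb2 : (2:ℝ) ≤ b := by have := Real.sqrt_nonneg t; rw [hb_def]; linarith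
  have hab : a ≤ b := le_trans ha1 (by linarith)
  have hga : gOrl a ≤ t := by
    have hlog : Real.log (a + 1 / a) ≤ a + 1 / a := by
      have := Real.log_le_sub_one_of_pos (show (0:ℝ) < a + 1 / a by positivity)
      linarith
    have h1 : gOrl a ≤ a ^ 2 * (a + 1 / a) :=
      mul_le_mul_of_nonneg_left hlog (by positivity)
    have h2 : a ^ 2 * (a + 1 / a) = a ^ 3 + a := by field_simp
    nlinarith
  have hgb : t ≤ gOrl b := by
    have hbsq : 2 * t ≤ b ^ 2 := by
      have hst : Real.sqrt t ^ 2 = t := Real.sq_sqrt ht.le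
      have := Real.sqrt_nonneg t
      nlinarith
    have hlog : (1:ℝ) / 2 ≤ Real.log (b + 1 / b) := by
      have : Real.log 2 ≤ Real.log (b + 1 / b) :=
        Real.log_le_log (by norm_num) (two_le_add_inv (by linarith))
      nlinarith [Real.log_two_gt_d9]
    have h5 : 2 * t * (1 / 2) ≤ b ^ 2 * Real.log (b + 1 / b) :=
      mul_le_mul hbsq hlog (by norm_num) (by positivity)
    have h6 : t ≤ b ^ 2 * Real.log (b + 1 / b) := by linarith
    simpa [gOrl, one_div] using h6
  have hc := intermediate_value_Icc hab (gOrl_contOn.mono (fun x hx => lt_of_lt_of_le ha0 hx.1))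
  obtain ⟨c, hc1, hc2⟩ := hc ⟨hga, hgb⟩
  exact ⟨c, lt_of_lt_of_le ha0 hc1.1, hc2⟩

set_option maxHeartbeats 2000000 in
/-- The asymptotics from Section 6 for the Orlicz function
`ψ(t) = t² log(t + 1/t)`: its generalized inverse satisfies
`ψ⁻¹(t)·(log(1/t))^{1/2}/(2t)^{1/2} → 1` as `t → 0⁺`, and consequently the
fundamental sequence satisfies `1/ψ⁻¹(1/n) ∼ √(n log(n+1))`. -/
theorem stmt_16 (ψ ψinv : ℝ → ℝ)
    (hψ0 : ψ 0 = 0)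
    (hψ : ∀ t : ℝ, 0 < t → ψ t = t ^ 2 * Real.log (t + 1 / t))
    (hψinv : ∀ t : ℝ, ψinv t = sSup {s : ℝ | 0 ≤ s ∧ ψ s ≤ t}) :
    Filter.Tendsto
      (fun t : ℝ => ψinv t * Real.sqrt (Real.log (1 / t)) / Real.sqrt (2 * t))
      (nhdsWithin 0 (Ioi 0)) (nhds 1) ∧
    ∃ c C : ℝ, 0 < c ∧ 0 < C ∧ ∀ n : ℕ, 1 ≤ n →
      c * Real.sqrt ((n : ℝ) * Real.log ((n : ℝ) + 1)) ≤ 1 / ψinv (1 / (n : ℝ)) ∧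
      1 / ψinv (1 / (n : ℝ)) ≤ C * Real.sqrt ((n : ℝ) * Real.log ((n : ℝ) + 1)) := by
  have hψeq : ∀ s : ℝ, 0 < s → ψ s = gOrl s := fun s hs => (hψ s hs).trans rfl
  -- the key structural fact about the generalized inverse
  have key : ∀ t : ℝ, 0 < t → 0 < ψinv t ∧ gOrl (ψinv t) = t := by
    intro t ht
    obtain ⟨s, hs, hgs⟩ := gOrl_surj ht
    have hiv : ψinv t = s := by
      rw [hψinv]
      apply IsGreatest.csSup_eq
      constructor
      · exact ⟨hs.le, by rw [hψeq s hs, hgs]⟩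
      · intro y hy
        by_contra h
        push_neg at h
        have hy0 : 0 < y := lt_trans hs h
        have hmono := gOrl_mono (mem_Ioi.2 hs) (mem_Ioi.2 hy0) h
        have hyt : ψ y ≤ t := hy.2
        rw [hψeq y hy0] at hyt
        rw [hgs] at hmono
        linarith
    exact ⟨hiv ▸ hs, hiv ▸ hgs⟩
  have hfpos : ∀ t : ℝ, 0 < t → 0 < ψinv t := fun t ht => (key t ht).1
  have hfeq : ∀ t : ℝ, 0 < t → (ψinv t) ^ 2 * Lf (ψinv t) = t := fun t ht => (key t ht).2
  -- Part 1 : the limit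
  have part1 : Filter.Tendsto
      (fun t : ℝ => ψinv t * Real.sqrt (Real.log (1 / t)) / Real.sqrt (2 * t))
      (nhdsWithin 0 (Ioi 0)) (nhds 1) := by
    set G : ℝ → ℝ := fun s =>
      1 - Real.log (s ^ 2 + 1) / Lf s - Real.log (Lf s) / (2 * Lf s) with hG_def
    -- the expression rewritten through G
    have heq : ∀ t ∈ Ioi (0:ℝ),
        ψinv t * Real.sqrt (Real.log (1 / t)) / Real.sqrt (2 * t)
          = Real.sqrt (G (ψinv t)) := by
      intro t ht
      rw [mem_Ioi] at ht
      set s := ψinv t with hs_def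
      have hs0 : 0 < s := hfpos t ht
      have hgs : s ^ 2 * Lf s = t := hfeq t ht
      have hL0 : 0 < Lf s := Lf_pos hs0
      have hlogt : Real.log (1 / t) = 2 * Lf s - 2 * Real.log (s ^ 2 + 1) - Real.log (Lf s) := by
        rw [one_div, Real.log_inv, ← hgs,
          Real.log_mul (by positivity) hL0.ne', Real.log_pow]
        have := Lf_split hs0
        push_cast
        linarith
      have hsqrt2t : Real.sqrt (2 * t) = s * Real.sqrt (2 * Lf s) := by
        rw [← hgs, show 2 * (s ^ 2 * Lf s) = s ^ 2 * (2 * Lf s) by ring,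
          Real.sqrt_mul (sq_nonneg s), Real.sqrt_sq hs0.le]
      rw [hsqrt2t, hlogt]
      rw [show s * Real.sqrt (2 * Lf s) = Real.sqrt (2 * Lf s) * s by ring,
        mul_comm s (Real.sqrt (2 * Lf s - 2 * Real.log (s ^ 2 + 1) - Real.log (Lf s))),
        mul_div_mul_right _ _ hs0.ne',
        ← Real.sqrt_div' _ (by positivity : (0:ℝ) ≤ 2 * Lf s)]
      congr 1
      simp only [hG_def]
      field_simp
    -- G tends to 1
    have hLtop : Tendsto Lf (nhdsWithin 0 (Ioi 0)) atTop := by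
      have h1 : Tendsto (fun s : ℝ => Real.log (s ^ 2 + 1)) (nhdsWithin 0 (Ioi 0)) (nhds 0) := by
        have hc : ContinuousAt (fun s : ℝ => Real.log (s ^ 2 + 1)) 0 := by
          apply (Real.continuousAt_log (by norm_num)).comp
          fun_prop
        have := hc.tendsto.mono_left (nhdsWithin_le_nhds (s := Ioi (0:ℝ)))
        simpa using this
      have h2 : Tendsto (fun s : ℝ => -Real.log s) (nhdsWithin 0 (Ioi 0)) atTop :=
        tendsto_neg_atTop_iff.mpr Real.tendsto_log_nhdsGT_zero
      apply (h1.add_atTop h2).congr'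
      filter_upwards [eventually_mem_nhdsWithin] with s hs
      rw [Lf_split (mem_Ioi.1 hs)]
      ring
    have h1' : Tendsto (fun s : ℝ => Real.log (s ^ 2 + 1) / Lf s)
        (nhdsWithin 0 (Ioi 0)) (nhds 0) := by
      have h1 : Tendsto (fun s : ℝ => Real.log (s ^ 2 + 1)) (nhdsWithin 0 (Ioi 0)) (nhds 0) := by
        have hc : ContinuousAt (fun s : ℝ => Real.log (s ^ 2 + 1)) 0 := by
          apply (Real.continuousAt_log (by norm_num)).comp
          fun_prop
        have := hc.tendsto.mono_left (nhdsWithin_le_nhds (s := Ioi (0:ℝ)))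
        simpa using this
      have := h1.mul (tendsto_inv_atTop_zero.comp hLtop)
      simpa [div_eq_mul_inv] using this
    have h2' : Tendsto (fun s : ℝ => Real.log (Lf s) / (2 * Lf s))
        (nhdsWithin 0 (Ioi 0)) (nhds 0) := by
      have hbase : Tendsto (fun x : ℝ => Real.log x / x) atTop (nhds 0) :=
        Real.isLittleO_log_id_atTop.tendsto_div_nhds_zero
      have := (hbase.comp hLtop).div_const 2
      simp only [Function.comp] at this ⊢
      have heq2 : ∀ s : ℝ, Real.log (Lf s) / Lf s / 2 = Real.log (Lf s) / (2 * Lf s) := by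
        intro s; rw [div_div]; ring_nf
      simpa [heq2] using this
    have hGlim : Tendsto G (nhdsWithin 0 (Ioi 0)) (nhds 1) := by
      have h : Tendsto (fun s : ℝ => 1 - Real.log (s ^ 2 + 1) / Lf s
          - Real.log (Lf s) / (2 * Lf s)) (nhdsWithin 0 (Ioi 0)) (nhds (1 - 0 - 0)) :=
        (tendsto_const_nhds.sub h1').sub h2'
      simpa using h
    -- ψinv tends to 0 within (0,∞)
    have hcomp : Tendsto ψinv (nhdsWithin 0 (Ioi 0)) (nhdsWithin 0 (Ioi 0)) := by
      rw [tendsto_nhdsWithin_iff]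
      constructor
      · apply tendsto_order.2
        constructor
        · intro a ha
          filter_upwards [self_mem_nhdsWithin] with t ht
          exact lt_trans ha (hfpos t ht)
        · intro b hb
          have hb2 : 0 < b / 2 := by linarith
          have hgb : 0 < gOrl (b / 2) := gOrl_pos hb2
          filter_upwards [Ioo_mem_nhdsGT_of_mem
            (show (0:ℝ) ∈ Ico 0 (gOrl (b / 2)) from ⟨le_rfl, hgb⟩)] with t ht
          have h1 := (key t ht.1).2
          have h2 := hfpos t ht.1
          by_contra h
          push_neg at h
          have hmono : gOrl (b / 2) < gOrl (ψinv t) :=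
            gOrl_mono (mem_Ioi.2 hb2) (mem_Ioi.2 h2) (by linarith)
          rw [h1] at hmono
          exact absurd ht.2 (not_lt.2 hmono.le)
      · filter_upwards [self_mem_nhdsWithin] with t ht
        exact hfpos t ht
    have hsq : Tendsto (fun s : ℝ => Real.sqrt (G s)) (nhdsWithin 0 (Ioi 0)) (nhds 1) := by
      have := (Real.continuous_sqrt.continuousAt (x := (1:ℝ))).tendsto.comp hGlim
      simpa [Function.comp_def] using this
    have htot := hsq.comp hcomp
    apply htot.congr'
    filter_upwards [eventually_mem_nhdsWithin] with t ht
    exact (heq t ht).symm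
  refine ⟨part1, Real.sqrt 8⁻¹, Real.sqrt 7, Real.sqrt_pos.2 (by norm_num),
    Real.sqrt_pos.2 (by norm_num), ?_⟩
  intro n hn
  have hn1 : (1:ℝ) ≤ (n:ℝ) := by exact_mod_cast hn
  have hn0 : (0:ℝ) < (n:ℝ) := by linarith
  have ht : (0:ℝ) < 1 / (n:ℝ) := by positivity
  set s := ψinv (1 / (n:ℝ)) with hs_def
  have hs0 : 0 < s := hfpos _ ht
  have hgs : s ^ 2 * Lf s = 1 / (n:ℝ) := hfeq _ ht
  have hL0 : 0 < Lf s := Lf_pos hs0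
  have hlog2 : Real.log 2 ≤ Lf s := log2_le_Lf hs0
  have hlogn1 : Real.log 2 ≤ Real.log ((n:ℝ) + 1) :=
    Real.log_le_log (by norm_num) (by linarith)
  have hkey : (n:ℝ) * Lf s = (1 / s) ^ 2 := by
    rw [div_pow, one_pow, eq_div_iff (by positivity : s ^ 2 ≠ 0),
      show (n:ℝ) * Lf s * s ^ 2 = (n:ℝ) * (s ^ 2 * Lf s) by ring, hgs]
    field_simp
  have hinv : 1 / s = Real.sqrt ((n:ℝ) * Lf s) := by
    rw [hkey, Real.sqrt_sq (by positivity)]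
  have hlogs : 2 * Real.log s + Real.log (Lf s) = -Real.log (n:ℝ) := by
    have h := congrArg Real.log hgs
    rw [Real.log_mul (by positivity) hL0.ne', Real.log_pow, one_div, Real.log_inv] at h
    push_cast at h
    linarith
  -- upper bound : Lf s ≤ 7 log (n+1)
  have hgOrl : gOrl s = 1 / (n:ℝ) := hgs
  have hsle2 : s ≤ 2 := by
    by_contra h
    push_neg at h
    have h2 : gOrl 2 < gOrl s := gOrl_mono (mem_Ioi.2 (by norm_num)) (mem_Ioi.2 hs0) h
    have h5 : (1:ℝ) < gOrl 2 := by
      have he : gOrl 2 = 4 * Real.log (2 + 1 / 2) := by norm_num [gOrl]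
      have h4 : Real.log 2 ≤ Real.log (2 + 1 / 2) := Real.log_le_log (by norm_num) (by norm_num)
      nlinarith [Real.log_two_gt_d9]
    have h6 : 1 / (n:ℝ) ≤ 1 := by rw [div_le_one hn0]; exact hn1
    rw [hgOrl] at h2
    linarith
  have hLup : Lf s ≤ 7 * Real.log ((n:ℝ) + 1) := by
    have hss : s * (1 / s) = 1 := by field_simp
    have h51 : s + 1 / s ≤ 5 / s := by
      rw [le_div_iff₀ hs0]
      nlinarith [hss]
    have h52 : Lf s ≤ Real.log 5 - Real.log s := by
      have h := Real.log_le_log (by positivity) h51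
      rwa [Real.log_div (by norm_num) hs0.ne'] at h
    have h53 : Real.log (Lf s) ≤ Lf s := by linarith [Real.log_le_sub_one_of_pos hL0]
    have h55 : Real.log 5 ≤ 3 * Real.log 2 := by
      have h := Real.log_le_log (by norm_num) (show (5:ℝ) ≤ 2 ^ 3 by norm_num)
      rw [Real.log_pow] at h
      push_cast at h
      linarith
    have h56 : Real.log (n:ℝ) ≤ Real.log ((n:ℝ) + 1) := Real.log_le_log hn0 (by linarith)
    linarith
  -- lower bound : 8⁻¹ log (n+1) ≤ Lf s
  have hLlow : 8⁻¹ * Real.log ((n:ℝ) + 1) ≤ Lf s := by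
    rcases eq_or_lt_of_le hn1 with h1 | h1
    · have hne : ((n:ℝ) + 1) = 2 := by rw [← h1]; norm_num
      rw [hne]
      nlinarith [Real.log_two_gt_d9]
    · have hn2 : (2:ℝ) ≤ (n:ℝ) := by
        have h2 : (1:ℕ) < n := by exact_mod_cast h1
        exact_mod_cast h2
      have hlow1 : Real.log (1 / s) ≤ Lf s :=
        Real.log_le_log (by positivity) (by linarith)
      have hlow2 : Real.log ((n:ℝ) * Lf s) = 2 * Real.log (1 / s) := by
        have h := congrArg Real.log hkey
        rw [Real.log_pow] at h
        push_cast at h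
        linarith
      have hlow3 : Real.log ((n:ℝ) * Real.log 2) ≤ Real.log ((n:ℝ) * Lf s) :=
        Real.log_le_log (by positivity)
          (mul_le_mul_of_nonneg_left hlog2 hn0.le)
      have hlow4 : Real.log ((n:ℝ) + 1) ≤ 4 * Real.log ((n:ℝ) * Real.log 2) := by
        have hbig : (n:ℝ) + 1 ≤ ((n:ℝ) * Real.log 2) ^ 4 := by
          have hl : (0.6931:ℝ) ≤ Real.log 2 := by linarith [Real.log_two_gt_d9]
          have h4 : (0.6931:ℝ) ^ 4 * (n:ℝ) ^ 4 ≤ (Real.log 2) ^ 4 * (n:ℝ) ^ 4 := by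
            apply mul_le_mul_of_nonneg_right _ (by positivity)
            exact pow_le_pow_left₀ (by norm_num) hl 4
          have hn4 : 8 * (n:ℝ) ≤ (n:ℝ) ^ 4 := by
            have hcube : (2:ℝ) ^ 3 ≤ (n:ℝ) ^ 3 := pow_le_pow_left₀ (by norm_num) hn2 3
            nlinarith [hcube, hn0]
          nlinarith
        have h := Real.log_le_log (by positivity) hbig
        rw [Real.log_pow] at h
        push_cast at h
        linarith
      linarith
  constructor
  · rw [hinv, ← Real.sqrt_mul (by norm_num : (0:ℝ) ≤ 8⁻¹)]
    apply Real.sqrt_le_sqrt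
    rw [show (8:ℝ)⁻¹ * ((n:ℝ) * Real.log ((n:ℝ) + 1))
        = (n:ℝ) * (8⁻¹ * Real.log ((n:ℝ) + 1)) by ring]
    exact mul_le_mul_of_nonneg_left hLlow hn0.le
  · rw [hinv, ← Real.sqrt_mul (by norm_num : (0:ℝ) ≤ 7)]
    apply Real.sqrt_le_sqrt
    rw [show (7:ℝ) * ((n:ℝ) * Real.log ((n:ℝ) + 1))
        = (n:ℝ) * (7 * Real.log ((n:ℝ) + 1)) by ring]
    exact mul_le_mul_of_nonneg_left hLup hn0.le
end

section
/- Let w:(0,∞)→(0,∞) be nonincreasing, continuous and integrable, satisfying condition (3.6) with constants c₁,d₁>0 and α₁>1, and let h(t)=∫_t^∞ w(s) ds and g(s)=inf_{t>0} max(t, s·h(t)). Then there exist constants C₁,C₂>0 depending only on c₁,d₁,α₁ such that for all real numbers b ≥ a ≥ 1 with a/b ≤ w(1): C₁·a·g(b/a) ≤ ∫_0^∞ min(a, b·w(t)) dt ≤ C₂·a·g(b/a). -/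
open MeasureTheory Set

set_option maxHeartbeats 1000000

/-- The one-dimensional integral estimate underlying the proof of Theorem 0.2:
for a regular (condition (3.6)) nonincreasing continuous integrable weight `w`
and `b ≥ a ≥ 1` with `a/b ≤ w(1)`, one has
`∫_0^∞ min(a, b·w(t)) dt ∼ a·g(b/a)`, with constants depending only on the
regularity constants. -/
theorem stmt_18 (c₁ d₁ α₁ : ℝ) (hc₁ : 0 < c₁) (hd₁ : 0 < d₁) (hα₁ : 1 < α₁) :
    ∃ C₁ C₂ : ℝ, 0 < C₁ ∧ 0 < C₂ ∧
      ∀ w h g : ℝ → ℝ,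
        (∀ t ∈ Ioi (0:ℝ), 0 < w t) →
        AntitoneOn w (Ioi 0) →
        ContinuousOn w (Ioi 0) →
        IntegrableOn w (Ioi 0) →
        (∀ t, h t = ∫ s in Ioi t, w s) →
        (∀ s, g s = ⨅ t : Ioi (0:ℝ), max (t : ℝ) (s * h (t : ℝ))) →
        (∀ s t : ℝ, 1 ≤ s → s ≤ t → c₁ * (t / s) ^ α₁ ≤ w s / w t) →
        (∀ s : ℝ, 1 ≤ s → w s / w (2 * s) ≤ d₁) →
        ∀ a b : ℝ, 1 ≤ a → a ≤ b → a / b ≤ w 1 →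
          C₁ * (a * g (b / a)) ≤ (∫ t in Ioi (0:ℝ), min a (b * w t)) ∧
          (∫ t in Ioi (0:ℝ), min a (b * w t)) ≤ C₂ * (a * g (b / a)) := by
  classical
  set K : ℝ := 1 / (c₁ * (α₁ - 1)) with hK
  have hKpos : 0 < K := by
    apply div_pos one_pos
    have : 0 < α₁ - 1 := by linarith
    positivity
  set Cc : ℝ := max 1 (max d₁ K) with hCc
  have hCc1 : (1:ℝ) ≤ Cc := le_max_left _ _
  have hd₁Cc : d₁ ≤ Cc := le_trans (le_max_left d₁ K) (le_max_right 1 _)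
  have hKCc : K ≤ Cc := le_trans (le_max_right d₁ K) (le_max_right 1 _)
  clear_value K Cc
  refine ⟨1, 2 * Cc, one_pos, by linarith, ?_⟩
  intro w h g hwpos hanti hcont hwint hh hg h36 hdbl a b ha hab haw
  have ha0 : (0:ℝ) < a := lt_of_lt_of_le one_pos ha
  have hb0 : (0:ℝ) < b := lt_of_lt_of_le ha0 hab
  set s := b / a with hsdef
  have hs0 : 0 < s := div_pos hb0 ha0
  have hsa : a * s = b := by rw [hsdef]; field_simp
  have hsw1 : ∀ x : ℝ, x = a / b → s * x = 1 := by
    intro x hx; rw [hx, hsdef]; field_simp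
  clear_value s
  have hw1 : 0 < w 1 := hwpos 1 (mem_Ioi.mpr one_pos)
  -- find crossing point t₀ with w t₀ = a / b
  set T : ℝ := max 1 (w 1 * b / (c₁ * a)) with hT
  have hT1 : (1:ℝ) ≤ T := le_max_left _ _
  have hT0 : (0:ℝ) < T := lt_of_lt_of_le one_pos hT1
  have hTpow : w 1 * b / (c₁ * a) ≤ T ^ α₁ := by
    have hTT : w 1 * b / (c₁ * a) ≤ T := le_max_right 1 (w 1 * b / (c₁ * a))
    have hpow : T ≤ T ^ α₁ := by
      calc T = T ^ (1:ℝ) := (Real.rpow_one T).symm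
      _ ≤ T ^ α₁ := Real.rpow_le_rpow_of_exponent_le hT1 hα₁.le
    linarith
  have hwT : w T ≤ a / b := by
    have h1 := h36 1 T le_rfl hT1
    rw [div_one] at h1
    have hwT0 : 0 < w T := hwpos T (mem_Ioi.mpr hT0)
    have hTpow0 : 0 < T ^ α₁ := Real.rpow_pos_of_pos hT0 _
    rw [le_div_iff₀ hwT0] at h1
    have h3 : w 1 * b ≤ c₁ * T ^ α₁ * a := by
      rw [div_le_iff₀ (by positivity)] at hTpow; nlinarith [hTpow]
    rw [le_div_iff₀ hb0]
    nlinarith [mul_le_mul_of_nonneg_right h1 hb0.le, h3]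
  clear_value T
  have hIcc : Icc (1:ℝ) T ⊆ Ioi 0 := fun x hx => lt_of_lt_of_le one_pos hx.1
  obtain ⟨t₀, ht₀mem, hwt₀⟩ :=
    intermediate_value_Icc' hT1 (hcont.mono hIcc) (⟨hwT, haw⟩ : a / b ∈ Icc (w T) (w 1))
  have ht₀1 : (1:ℝ) ≤ t₀ := ht₀mem.1
  have ht₀0 : (0:ℝ) < t₀ := lt_of_lt_of_le one_pos ht₀1
  have ht₀Ioi : t₀ ∈ Ioi (0:ℝ) := ht₀0
  have hw_nonneg : ∀ t ∈ Ioi (0:ℝ), 0 ≤ w t := fun t ht => (hwpos t ht).le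
  have hw_ae : ∀ u : ℝ, 0 < u → 0 ≤ᵐ[volume.restrict (Ioi u)] w := by
    intro u hu
    exact (ae_restrict_iff' measurableSet_Ioi).mpr
      (ae_of_all _ fun t ht => hw_nonneg t (lt_trans hu ht))
  have h_anti : ∀ u v : ℝ, 0 < u → u ≤ v → h v ≤ h u := by
    intro u v hu huv
    rw [hh, hh]
    exact setIntegral_mono_set (hwint.mono_set (Ioi_subset_Ioi hu.le)) (hw_ae u hu)
      (HasSubset.Subset.eventuallyLE (Ioi_subset_Ioi huv))
  -- integrability of the min
  have hmin_int : IntegrableOn (fun t => min a (b * w t)) (Ioi 0) := by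
    refine Integrable.mono' (hwint.const_mul b) ?_ ?_
    · exact (aemeasurable_const.min
        ((hwint.aestronglyMeasurable.aemeasurable.const_mul b))).aestronglyMeasurable
    · refine (ae_restrict_iff' measurableSet_Ioi).mpr (ae_of_all _ fun t ht => ?_)
      have h0 : 0 ≤ b * w t := mul_nonneg hb0.le (hw_nonneg t ht)
      rw [Real.norm_eq_abs, abs_of_nonneg (le_min ha0.le h0)]
      exact min_le_right _ _
  -- split the integral
  have hdisj : Disjoint (Ioc (0:ℝ) t₀) (Ioi t₀) := Ioc_disjoint_Ioi le_rfl
  have hunion : Ioc (0:ℝ) t₀ ∪ Ioi t₀ = Ioi 0 := Ioc_union_Ioi_eq_Ioi ht₀0.le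
  have hI : (∫ t in Ioi (0:ℝ), min a (b * w t)) = a * t₀ + b * h t₀ := by
    rw [← hunion, setIntegral_union hdisj measurableSet_Ioi
      (hmin_int.mono_set (hunion ▸ subset_union_left))
      (hmin_int.mono_set (hunion ▸ subset_union_right))]
    have h1 : (∫ t in Ioc (0:ℝ) t₀, min a (b * w t)) = a * t₀ := by
      have heq : EqOn (fun t => min a (b * w t)) (fun _ => a) (Ioc (0:ℝ) t₀) := by
        intro t ht
        refine min_eq_left ?_
        have hwge : w t₀ ≤ w t := hanti (mem_Ioi.mpr ht.1) ht₀Ioi ht.2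
        rw [hwt₀] at hwge
        calc a = b * (a / b) := by field_simp
        _ ≤ b * w t := mul_le_mul_of_nonneg_left hwge hb0.le
      rw [setIntegral_congr_fun measurableSet_Ioc heq, setIntegral_const, measureReal_def, Real.volume_Ioc,
        sub_zero, ENNReal.toReal_ofReal ht₀0.le, smul_eq_mul, mul_comm]
    have h2 : (∫ t in Ioi t₀, min a (b * w t)) = b * h t₀ := by
      have heq : EqOn (fun t => min a (b * w t)) (fun t => b * w t) (Ioi t₀) := by
        intro t ht
        refine min_eq_right ?_
        have hwle : w t ≤ w t₀ := hanti ht₀Ioi (mem_Ioi.mpr (lt_trans ht₀0 ht)) (le_of_lt ht)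
        rw [hwt₀] at hwle
        calc b * w t ≤ b * (a / b) := mul_le_mul_of_nonneg_left hwle hb0.le
        _ = a := by field_simp
      rw [setIntegral_congr_fun measurableSet_Ioi heq, integral_const_mul, hh]
    rw [h1, h2]
  have hwt₀pos : 0 < w t₀ := hwpos t₀ ht₀Ioi
  have hsw : s * w t₀ = 1 := hsw1 _ hwt₀
  -- upper bound on s * h t₀
  have hup : s * h t₀ ≤ K * t₀ := by
    have hptw : ∀ t ∈ Ioi t₀, w t ≤ (w t₀ * t₀ ^ α₁ / c₁) * t ^ (-α₁) := by
      intro t ht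
      have ht0 : 0 < t := lt_trans ht₀0 ht
      have h1 := h36 t₀ t ht₀1 (le_of_lt ht)
      have hwt0 : 0 < w t := hwpos t (mem_Ioi.mpr ht0)
      rw [le_div_iff₀ hwt0] at h1
      have hrp : (t / t₀) ^ α₁ = t ^ α₁ / t₀ ^ α₁ := Real.div_rpow ht0.le ht₀0.le α₁
      have htpow : 0 < t ^ α₁ := Real.rpow_pos_of_pos ht0 _
      have ht₀pow : 0 < t₀ ^ α₁ := Real.rpow_pos_of_pos ht₀0 _
      rw [hrp] at h1
      have key : c₁ * t ^ α₁ * w t ≤ w t₀ * t₀ ^ α₁ := by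
        have := mul_le_mul_of_nonneg_right h1 ht₀pow.le
        calc c₁ * t ^ α₁ * w t = c₁ * (t ^ α₁ / t₀ ^ α₁) * w t * t₀ ^ α₁ := by
              field_simp
        _ ≤ w t₀ * t₀ ^ α₁ := this
      rw [Real.rpow_neg ht0.le]
      have hrew : (w t₀ * t₀ ^ α₁ / c₁) * (t ^ α₁)⁻¹ = (w t₀ * t₀ ^ α₁) / (c₁ * t ^ α₁) := by
        field_simp
      rw [hrew, le_div_iff₀ (by positivity)]
      nlinarith [key]
    have hcmp : h t₀ ≤ (w t₀ * t₀ ^ α₁ / c₁) * ∫ t in Ioi t₀, t ^ (-α₁) := by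
      rw [hh, ← integral_const_mul]
      exact setIntegral_mono_on (hwint.mono_set (Ioi_subset_Ioi ht₀0.le))
        ((integrableOn_Ioi_rpow_of_lt (by linarith) ht₀0).const_mul _) measurableSet_Ioi hptw
    rw [integral_Ioi_rpow_of_lt (by linarith) ht₀0] at hcmp
    have hval : (w t₀ * t₀ ^ α₁ / c₁) * (-t₀ ^ (-α₁ + 1) / (-α₁ + 1)) = w t₀ * t₀ * K := by
      have e1 : t₀ ^ α₁ * t₀ ^ (-α₁ + 1) = t₀ := by
        rw [← Real.rpow_add ht₀0]; norm_num
      have e2 : (-α₁ + 1) ≠ 0 := by linarith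
      have e3 : (α₁ - 1) ≠ 0 := by linarith
      have e0 : -t₀ ^ (-α₁ + 1) / (-α₁ + 1) = t₀ ^ (-α₁ + 1) / (α₁ - 1) := by
        rw [div_eq_div_iff e2 e3]; ring
      rw [e0]
      calc (w t₀ * t₀ ^ α₁ / c₁) * (t₀ ^ (-α₁ + 1) / (α₁ - 1))
          = w t₀ * (t₀ ^ α₁ * t₀ ^ (-α₁ + 1)) * (1 / (c₁ * (α₁ - 1))) := by
            field_simp
      _ = w t₀ * t₀ * K := by rw [e1, hK]
    rw [hval] at hcmp
    calc s * h t₀ ≤ s * (w t₀ * t₀ * K) := mul_le_mul_of_nonneg_left hcmp hs0.le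
    _ = (s * w t₀) * (t₀ * K) := by ring
    _ = K * t₀ := by rw [hsw]; ring
  -- lower bound on s * h t₀
  have hlow : t₀ ≤ d₁ * (s * h t₀) := by
    have h2t₀0 : (0:ℝ) < 2 * t₀ := by linarith
    have hw2 : 0 < w (2 * t₀) := hwpos _ (mem_Ioi.mpr h2t₀0)
    have hd : w t₀ ≤ d₁ * w (2 * t₀) := by
      have hx := hdbl t₀ ht₀1
      rw [div_le_iff₀ hw2] at hx; linarith [hx]
    have hint2 : t₀ * w (2 * t₀) ≤ h t₀ := by
      have step1 : (∫ t in Ioc t₀ (2 * t₀), w t) ≤ h t₀ := by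
        rw [hh]
        exact setIntegral_mono_set (hwint.mono_set (Ioi_subset_Ioi ht₀0.le)) (hw_ae t₀ ht₀0)
          (HasSubset.Subset.eventuallyLE Ioc_subset_Ioi_self)
      have hconst : (∫ _t in Ioc t₀ (2 * t₀), w (2 * t₀)) = t₀ * w (2 * t₀) := by
        rw [setIntegral_const, measureReal_def, Real.volume_Ioc, ENNReal.toReal_ofReal (by linarith),
          smul_eq_mul]
        ring
      have step2 : (∫ _t in Ioc t₀ (2 * t₀), w (2 * t₀)) ≤ ∫ t in Ioc t₀ (2 * t₀), w t := by
        refine setIntegral_mono_on ((integrableOn_const_iff (by finiteness)).mpr (Or.inr ?_))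
          (hwint.mono_set (fun x hx => lt_trans ht₀0 hx.1)) measurableSet_Ioc
          (fun t ht => hanti (mem_Ioi.mpr (lt_trans ht₀0 ht.1)) (mem_Ioi.mpr h2t₀0)
            (le_trans ht.2 le_rfl))
        · rw [Real.volume_Ioc]; exact ENNReal.ofReal_lt_top
      rw [hconst] at step2
      linarith
    have e1 : t₀ * w t₀ ≤ d₁ * h t₀ := by nlinarith [hint2, hd, ht₀0]
    calc t₀ = s * (t₀ * w t₀) := by
          have : s * (t₀ * w t₀) = t₀ * (s * w t₀) := by ring
          rw [this, hsw, mul_one]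
    _ ≤ s * (d₁ * h t₀) := mul_le_mul_of_nonneg_left e1 hs0.le
    _ = d₁ * (s * h t₀) := by ring
  have hsh0 : 0 < s * h t₀ := by nlinarith [hlow, ht₀0, hd₁]
  -- bounds relating to g
  have hgs := hg s
  have hbdd : BddBelow (range fun t : Ioi (0:ℝ) => max (t : ℝ) (s * h t)) := by
    refine ⟨0, fun x hx => ?_⟩
    obtain ⟨⟨t, ht⟩, rfl⟩ := hx
    exact le_trans (le_of_lt ht) (le_max_left _ _)
  have hg_le : g s ≤ max t₀ (s * h t₀) := by
    rw [hgs]; exact ciInf_le hbdd ⟨t₀, ht₀Ioi⟩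
  have hle_g : min t₀ (s * h t₀) ≤ g s := by
    rw [hgs]
    refine le_ciInf fun tp => ?_
    obtain ⟨t, ht⟩ := tp
    rcases le_total t t₀ with hc | hc
    · have hht : h t₀ ≤ h t := h_anti t t₀ ht hc
      exact le_trans (min_le_right _ _)
        (le_trans (mul_le_mul_of_nonneg_left hht hs0.le) (le_max_right _ _))
    · exact le_trans (min_le_left _ _) (le_trans hc (le_max_left _ _))
  have hmaxmin : max t₀ (s * h t₀) ≤ Cc * min t₀ (s * h t₀) := by
    refine max_le ?_ ?_
    · rcases min_cases t₀ (s * h t₀) with ⟨he, _⟩ | ⟨he, _⟩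
      · rw [he]; nlinarith [hCc1, ht₀0]
      · rw [he]
        calc t₀ ≤ d₁ * (s * h t₀) := hlow
        _ ≤ Cc * (s * h t₀) := mul_le_mul_of_nonneg_right hd₁Cc hsh0.le
    · rcases min_cases t₀ (s * h t₀) with ⟨he, _⟩ | ⟨he, _⟩
      · rw [he]
        calc s * h t₀ ≤ K * t₀ := hup
        _ ≤ Cc * t₀ := mul_le_mul_of_nonneg_right hKCc ht₀0.le
      · rw [he]; nlinarith [hCc1, hsh0]
  -- conclusion
  have hbh : b * h t₀ = a * (s * h t₀) := by rw [← hsa]; ring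
  rw [hI, hbh]
  constructor
  · have hgle : g s ≤ t₀ + s * h t₀ :=
      le_trans hg_le (max_le (by linarith [hsh0]) (by linarith [ht₀0]))
    nlinarith [hgle, ha0, hsh0, ht₀0]
  · have h1 : t₀ + s * h t₀ ≤ 2 * max t₀ (s * h t₀) := by
      rcases max_cases t₀ (s * h t₀) with ⟨he, hle⟩ | ⟨he, hle⟩ <;> rw [he] <;> linarith
    have h2 : max t₀ (s * h t₀) ≤ Cc * g s :=
      le_trans hmaxmin (mul_le_mul_of_nonneg_left hle_g (by linarith [hCc1]))
    nlinarith [h1, h2, ha0]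
end
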